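/- arXiv:2602.12926 — 9 statements merged into one kernel-verified Lean document; each statement's English description precedes it below -/
import Mathlib

section
/- Let G be a K_{t,t}-free simple graph and let P be a subset of V(G) with |P| ≥ t². Then fewer than t vertices v of G satisfy |P \ N(v)| < t (i.e., fewer than t vertices are t-complete to P). -/
open Finset

variable {V : Type*}

/-- `G` contains no `K_{t,t}` subgraph: there are no two disjoint vertex sets of size `t`
with all edges between them present. -/
def KttFree (t : ℕ) (G : SimpleGraph V) : Prop :=
  ¬ ∃ A B : Finset V, Disjoint A B ∧ A.card = t ∧ B.card = t ∧
      ∀ a ∈ A, ∀ b ∈ B, G.Adj a b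

/-- `v` is `t`-complete to `P`: it has fewer than `t` non-neighbors in `P`. -/
def tComplete (G : SimpleGraph V) (t : ℕ) (v : V) (P : Finset V) : Prop :=
  ((P : Set V) \ {u | G.Adj v u}).ncard < t

/-- In a `K_{t,t}`-free graph, for any set `P` with `|P| ≥ t²`,
fewer than `t` vertices are `t`-complete to `P`. -/
theorem stmt0 [Fintype V] (t : ℕ) (G : SimpleGraph V) (hG : KttFree t G)
    (P : Finset V) (hP : t ^ 2 ≤ P.card) :
    {v : V | tComplete G t v P}.ncard < t := by
  classical
  rcases Nat.eq_zero_or_pos t with rfl | ht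
  · exact absurd ⟨∅, ∅, by simp⟩ hG
  by_contra h
  push_neg at h
  set S : Finset V := Finset.univ.filter (fun v => tComplete G t v P) with hS
  have hScoe : {v : V | tComplete G t v P} = ↑S := by
    ext v; simp [hS]
  rw [hScoe, Set.ncard_coe_finset] at h
  obtain ⟨A, hAS, hAcard⟩ := Finset.exists_subset_card_eq h
  -- non-neighbors of v in P
  set N : V → Finset V := fun v => P.filter (fun u => ¬ G.Adj v u) with hN
  have hNcard : ∀ v ∈ A, (N v).card ≤ t - 1 := by
    intro v hv
    have hvS : tComplete G t v P := by
      have := hAS hv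
      simpa [hS] using this
    unfold tComplete at hvS
    have heq : ((P : Set V) \ {u | G.Adj v u}) = ↑(N v) := by
      ext u; simp [hN, Set.mem_diff]
    rw [heq, Set.ncard_coe_finset] at hvS
    omega
  -- common neighbors of A in P
  set B : Finset V := P.filter (fun u => ∀ v ∈ A, G.Adj v u) with hB
  have hsub : P \ B ⊆ A.biUnion N := by
    intro u hu
    simp only [hB, Finset.mem_sdiff, Finset.mem_filter, not_and, not_forall] at hu
    obtain ⟨huP, hrest⟩ := hu
    obtain ⟨v, hvA, hnadj⟩ := hrest huP
    simp only [Finset.mem_biUnion, hN, Finset.mem_filter]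
    exact ⟨v, hvA, huP, hnadj⟩
  have hPB : (P \ B).card ≤ t * (t - 1) := by
    calc (P \ B).card ≤ (A.biUnion N).card := Finset.card_le_card hsub
    _ ≤ ∑ v ∈ A, (N v).card := Finset.card_biUnion_le
    _ ≤ ∑ v ∈ A, (t - 1) := Finset.sum_le_sum hNcard
    _ = t * (t - 1) := by rw [Finset.sum_const, hAcard, smul_eq_mul]
  have hBcard : t ≤ B.card := by
    have hBP : B ⊆ P := by rw [hB]; exact Finset.filter_subset _ _
    have h1 := Finset.card_sdiff_add_card_eq_card hBP
    have h2 : t ^ 2 = t * (t - 1) + t := by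
      nlinarith [Nat.sub_add_cancel ht]
    omega
  obtain ⟨B', hB'B, hB'card⟩ := Finset.exists_subset_card_eq hBcard
  apply hG
  refine ⟨A, B', ?_, hAcard, hB'card, ?_⟩
  · rw [Finset.disjoint_left]
    intro a haA haB'
    have := hB'B haB'
    simp only [hB, Finset.mem_filter] at this
    exact G.irrefl (this.2 a haA)
  · intro a ha b hb
    have := hB'B hb
    simp only [hB, Finset.mem_filter] at this
    exact this.2 a ha
end

section
/- Let G be a K_{t,t}-free simple graph, let P be a partition of V(G), and let S be the set of vertices contained in a part of P of size less than t², together with vertices that are t-complete to some part of P of size at least t². Then |S| < |P| · t². -/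
open Finset

variable {V : Type*}

/-- `Sparsify G 𝒫 t`: vertices in a part of size `< t²`, or `t`-complete to a part of
size `≥ t²`. -/
def Sparsify [Fintype V] [DecidableEq V] (G : SimpleGraph V)
    (P : Finpartition (Finset.univ : Finset V)) (t : ℕ) : Set V :=
  {v | (∃ A ∈ P.parts, v ∈ A ∧ A.card < t ^ 2) ∨
       ∃ A ∈ P.parts, t ^ 2 ≤ A.card ∧ tComplete G t v A}

open Classical in
lemma key_lemma [Fintype V] [DecidableEq V] {t : ℕ} {G : SimpleGraph V}
    (hG : KttFree t G) {A : Finset V} (hA : t ^ 2 ≤ A.card) :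
    (univ.filter fun v => tComplete G t v A).card < t := by
  by_contra h
  push_neg at h
  obtain ⟨W, hWsub, hWcard⟩ := Finset.exists_subset_card_eq h
  set B0 := A.filter (fun b => ∀ v ∈ W, G.Adj v b) with hB0
  have hnn : ∀ v ∈ W, (A.filter fun b => ¬ G.Adj v b).card < t := by
    intro v hv
    have hvW := hWsub hv
    simp only [mem_filter, mem_univ, true_and] at hvW
    have : ((A : Set V) \ {u | G.Adj v u}) = ↑(A.filter fun b => ¬ G.Adj v b) := by
      ext x; simp [Set.mem_diff]
    unfold tComplete at hvW
    rwa [this, Set.ncard_coe_finset] at hvW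
  have hdiff : A \ B0 ⊆ W.biUnion (fun v => A.filter fun b => ¬ G.Adj v b) := by
    intro b hb
    simp only [hB0, mem_sdiff, mem_filter, not_and, not_forall] at hb
    obtain ⟨hbA, hbn⟩ := hb
    obtain ⟨v, hvW, hnadj⟩ := hbn hbA
    exact mem_biUnion.2 ⟨v, hvW, mem_filter.2 ⟨hbA, hnadj⟩⟩
  have hdcard : (A \ B0).card ≤ t * (t - 1) := by
    calc (A \ B0).card ≤ (W.biUnion (fun v => A.filter fun b => ¬ G.Adj v b)).card :=
          card_le_card hdiff
      _ ≤ ∑ v ∈ W, (A.filter fun b => ¬ G.Adj v b).card := card_biUnion_le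
      _ ≤ ∑ _v ∈ W, (t - 1) := by
          refine Finset.sum_le_sum fun v hv => ?_
          exact Nat.le_sub_one_of_lt (hnn v hv)
      _ = t * (t - 1) := by rw [Finset.sum_const, hWcard, smul_eq_mul]
  have hB0sub : B0 ⊆ A := filter_subset _ _
  have hsd : (A \ B0).card = A.card - B0.card := card_sdiff_of_subset hB0sub
  have hB0le : B0.card ≤ A.card := card_le_card hB0sub
  have hmul : t * (t - 1) + t = t ^ 2 := by
    cases t with
    | zero => simp
    | succ n => simp only [Nat.succ_sub_one]; ring
  have hB0card : t ≤ B0.card := by omega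
  obtain ⟨B, hBsub, hBcard⟩ := Finset.exists_subset_card_eq hB0card
  apply hG
  refine ⟨W, B, ?_, hWcard, hBcard, ?_⟩
  · rw [Finset.disjoint_left]
    intro a haW haB
    have := hBsub haB
    simp only [hB0, mem_filter] at this
    exact G.irrefl (this.2 a haW)
  · intro a ha b hb
    have := hBsub hb
    simp only [hB0, mem_filter] at this
    exact this.2 a ha

/-- In a `K_{t,t}`-free graph, `|Sparsify(G, 𝒫, t)| < |𝒫| · t²`. -/
theorem stmt1 [Fintype V] [DecidableEq V] [Nonempty V] (t : ℕ) (G : SimpleGraph V)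
    (hG : KttFree t G) (P : Finpartition (Finset.univ : Finset V)) :
    (Sparsify G P t).ncard < P.parts.card * t ^ 2 := by
  classical
  rcases Nat.eq_zero_or_pos t with ht0 | ht
  · subst ht0
    exact absurd ⟨∅, ∅, disjoint_empty_left ∅, card_empty, card_empty,
      fun a ha => absurd ha (notMem_empty a)⟩ hG
  have hset : Sparsify G P t =
      ↑(univ.filter fun v => (∃ A ∈ P.parts, v ∈ A ∧ A.card < t ^ 2) ∨
        ∃ A ∈ P.parts, t ^ 2 ≤ A.card ∧ tComplete G t v A) := by
    ext v; simp [Sparsify]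
  rw [hset, Set.ncard_coe_finset]
  set f : Finset V → Finset V := fun A =>
    if A.card < t ^ 2 then A else univ.filter fun v => tComplete G t v A with hf
  have hsub : (univ.filter fun v => (∃ A ∈ P.parts, v ∈ A ∧ A.card < t ^ 2) ∨
      ∃ A ∈ P.parts, t ^ 2 ≤ A.card ∧ tComplete G t v A) ⊆ P.parts.biUnion f := by
    intro v hv
    simp only [mem_filter, mem_univ, true_and] at hv
    rcases hv with ⟨A, hAp, hvA, hAs⟩ | ⟨A, hAp, hAb, hvc⟩
    · exact mem_biUnion.2 ⟨A, hAp, by simp [hf, if_pos hAs, hvA]⟩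
    · refine mem_biUnion.2 ⟨A, hAp, ?_⟩
      simp only [hf, if_neg (not_lt.2 hAb), mem_filter, mem_univ, true_and]
      exact hvc
  have hfcard : ∀ A ∈ P.parts, (f A).card ≤ t ^ 2 - 1 := by
    intro A _
    simp only [hf]
    split_ifs with hsmall
    · omega
    · have h1 := key_lemma hG (not_lt.1 hsmall)
      have h2 : t ≤ t ^ 2 := by nlinarith
      omega
  have hparts : 0 < P.parts.card := by
    have : P.parts.Nonempty := P.parts_nonempty (Finset.univ_nonempty.ne_empty)
    exact card_pos.2 this
  calc (univ.filter fun v => (∃ A ∈ P.parts, v ∈ A ∧ A.card < t ^ 2) ∨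
        ∃ A ∈ P.parts, t ^ 2 ≤ A.card ∧ tComplete G t v A).card
      ≤ (P.parts.biUnion f).card := card_le_card hsub
    _ ≤ ∑ A ∈ P.parts, (f A).card := card_biUnion_le
    _ ≤ ∑ _A ∈ P.parts, (t ^ 2 - 1) := Finset.sum_le_sum hfcard
    _ = P.parts.card * (t ^ 2 - 1) := by rw [Finset.sum_const, smul_eq_mul]
    _ < P.parts.card * t ^ 2 := by
        have ht2 : 1 ≤ t ^ 2 := Nat.one_le_pow _ _ ht
        exact Nat.mul_lt_mul_of_le_of_lt (le_refl _) (by omega) hparts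
end

section
/- Let G be a K_{t,t}-free simple graph, let 𝒫 be a partition of V(G), and let 𝒫' be a refinement of 𝒫 obtained by splitting one part of 𝒫 into two nonempty parts (so |𝒫'| = |𝒫| + 1). Then |Sparsify(G, 𝒫', t) \ Sparsify(G, 𝒫, t)| < 2t². -/
open Finset

variable {V : Type*}

/-- `Q` refines `P`: every part of `Q` is contained in some part of `P`. -/
def Refines [Fintype V] [DecidableEq V]
    (Q P : Finpartition (Finset.univ : Finset V)) : Prop :=
  ∀ A ∈ Q.parts, ∃ B ∈ P.parts, A ⊆ B

open Classical in
lemma nonneighbors_eq (G : SimpleGraph V) (v : V) (C : Finset V) :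
    ((C : Set V) \ {u | G.Adj v u}) = ↑(C.filter (fun u => ¬ G.Adj v u)) := by
  ext u; simp [Set.mem_diff]

open Classical in
/-- In a `K_{t,t}`-free graph, fewer than `t` vertices are `t`-complete to a set of
size at least `t²`. -/
lemma tComplete_card_lt [Fintype V] [DecidableEq V] {t : ℕ} {G : SimpleGraph V}
    (hG : KttFree t G) (ht : 0 < t) {C : Finset V} (hC : t ^ 2 ≤ C.card) :
    (univ.filter (fun v => tComplete G t v C)).card < t := by
  by_contra h
  push_neg at h
  obtain ⟨S, hS, hScard⟩ := Finset.exists_subset_card_eq h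
  have hScomp : ∀ s ∈ S, (C.filter (fun u => ¬ G.Adj s u)).card ≤ t - 1 := by
    intro s hs
    have := (Finset.mem_filter.1 (hS hs)).2
    rw [tComplete, nonneighbors_eq, Set.ncard_coe_finset] at this
    omega
  set N := S.biUnion (fun s => C.filter (fun u => ¬ G.Adj s u)) with hN
  have hNcard : N.card ≤ t * (t - 1) := by
    refine le_trans Finset.card_biUnion_le ?_
    calc ∑ s ∈ S, (C.filter (fun u => ¬ G.Adj s u)).card
        ≤ ∑ _s ∈ S, (t - 1) := Finset.sum_le_sum hScomp
      _ = t * (t - 1) := by rw [Finset.sum_const, hScard, smul_eq_mul]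
  have hkey : t * (t - 1) + t = t ^ 2 := by
    obtain ⟨m, rfl⟩ : ∃ m, t = m + 1 := ⟨t - 1, (Nat.succ_pred_eq_of_pos ht).symm⟩
    have hm : m + 1 - 1 = m := rfl
    rw [hm, pow_two]
    ring
  have hB0 : t ≤ (C \ N).card := by
    have := Finset.le_card_sdiff N C
    omega
  obtain ⟨B, hBsub, hBcard⟩ := Finset.exists_subset_card_eq hB0
  refine hG ⟨S, B, ?_, hScard, hBcard, ?_⟩
  · rw [Finset.disjoint_left]
    intro a haS haB
    have haCN := hBsub haB
    rw [Finset.mem_sdiff] at haCN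
    exact haCN.2 (Finset.mem_biUnion.2 ⟨a, haS, Finset.mem_filter.2 ⟨haCN.1, G.irrefl⟩⟩)
  · intro a haS b hbB
    have hbCN := hBsub hbB
    rw [Finset.mem_sdiff] at hbCN
    by_contra hadj
    exact hbCN.2 (Finset.mem_biUnion.2 ⟨a, haS, Finset.mem_filter.2 ⟨hbCN.1, hadj⟩⟩)

/-- If `P'` refines `P` with one more part, at most two parts of `P'` are new. -/
lemma parts_diff_card_le [Fintype V] [DecidableEq V]
    {P P' : Finpartition (univ : Finset V)}
    (href : Refines P' P) (hcard : P'.parts.card = P.parts.card + 1) :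
    (P'.parts \ P.parts).card ≤ 2 := by
  classical
  set J := P'.parts \ P.parts with hJdef
  set K := P.parts \ P'.parts with hKdef
  have hJK : J.card = K.card + 1 := by
    have h1 := Finset.card_inter_add_card_sdiff P'.parts P.parts
    have h2 := Finset.card_inter_add_card_sdiff P.parts P'.parts
    rw [Finset.inter_comm] at h2
    simp only [← hJdef, ← hKdef] at h1 h2
    omega
  -- each part of P not in P' contains at least two parts of J
  have hfiber : ∀ B ∈ K, 2 ≤ (J.filter (· ⊆ B)).card := by
    intro B hB
    rw [hKdef, Finset.mem_sdiff] at hB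
    obtain ⟨hBP, hBP'⟩ := hB
    -- for any x ∈ B, its P'-part is a subset of B lying in J
    have key : ∀ x ∈ B, ∃ A ∈ J, x ∈ A ∧ A ⊆ B := by
      intro x hx
      obtain ⟨A, hA, hxA⟩ := P'.exists_mem (mem_univ x)
      obtain ⟨B₂, hB₂, hAB₂⟩ := href A hA
      have hB₂B : B₂ = B := P.eq_of_mem_parts hB₂ hBP (hAB₂ hxA) hx
      subst hB₂B
      have hAJ : A ∈ J := by
        rw [hJdef, Finset.mem_sdiff]
        refine ⟨hA, fun hAP => ?_⟩
        have : A = B₂ := P.eq_of_mem_parts hAP hBP hxA hx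
        exact hBP' (this ▸ hA)
      exact ⟨A, hAJ, hxA, hAB₂⟩
    obtain ⟨x, hx⟩ := P.nonempty_of_mem_parts hBP
    obtain ⟨A, hAJ, hxA, hAB⟩ := key x hx
    have hAne : A ≠ B := by
      rintro rfl
      exact hBP' ((Finset.mem_sdiff.1 hAJ).1)
    obtain ⟨y, hyB, hyA⟩ := Finset.exists_of_ssubset (hAB.ssubset_of_ne hAne)
    obtain ⟨A', hA'J, hyA', hA'B⟩ := key y hyB
    have hAA' : A ≠ A' := fun h => hyA (h ▸ hyA')
    calc 2 = ({A, A'} : Finset (Finset V)).card := (Finset.card_pair hAA').symm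
      _ ≤ (J.filter (· ⊆ B)).card := by
          apply Finset.card_le_card
          intro X hX
          rw [Finset.mem_insert, Finset.mem_singleton] at hX
          rcases hX with rfl | rfl
          · exact Finset.mem_filter.2 ⟨hAJ, hAB⟩
          · exact Finset.mem_filter.2 ⟨hA'J, hA'B⟩
  have hdisj : (K : Set (Finset V)).PairwiseDisjoint (fun B => J.filter (· ⊆ B)) := by
    intro B hB B' hB' hne
    simp only [Function.onFun]
    rw [Finset.disjoint_left]
    intro A hA hA'
    have h1 := Finset.mem_filter.1 hA
    have h2 := Finset.mem_filter.1 hA'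
    obtain ⟨z, hz⟩ := P'.nonempty_of_mem_parts ((Finset.mem_sdiff.1 h1.1).1)
    exact hne (P.eq_of_mem_parts ((Finset.mem_sdiff.1 hB).1) ((Finset.mem_sdiff.1 hB').1)
      (h1.2 hz) (h2.2 hz))
  have h2K : 2 * K.card ≤ J.card := by
    calc 2 * K.card = ∑ _B ∈ K, 2 := by rw [Finset.sum_const, smul_eq_mul, mul_comm]
      _ ≤ ∑ B ∈ K, (J.filter (· ⊆ B)).card := Finset.sum_le_sum hfiber
      _ = (K.biUnion (fun B => J.filter (· ⊆ B))).card := (Finset.card_biUnion hdisj).symm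
      _ ≤ J.card := Finset.card_le_card
          (Finset.biUnion_subset.2 fun B _ => Finset.filter_subset _ _)
  omega

/-- If `𝒫'` refines `𝒫` with `|𝒫'| = |𝒫| + 1`, then
`|Sparsify(G,𝒫',t) \ Sparsify(G,𝒫,t)| < 2t²`. -/
theorem stmt2 [Fintype V] [DecidableEq V] (t : ℕ) (G : SimpleGraph V)
    (hG : KttFree t G) (P P' : Finpartition (Finset.univ : Finset V))
    (href : Refines P' P) (hcard : P'.parts.card = P.parts.card + 1) :
    (Sparsify G P' t \ Sparsify G P t).ncard < 2 * t ^ 2 := by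
  classical
  rcases Nat.eq_zero_or_pos t with rfl | ht
  · exact absurd ⟨∅, ∅, Finset.disjoint_empty_left _, rfl, rfl, by simp⟩ hG
  have hJ2 : (P'.parts \ P.parts).card ≤ 2 := parts_diff_card_le href hcard
  set g : Finset V → Finset V := fun A =>
    if A.card < t ^ 2 then A else univ.filter (fun v => tComplete G t v A) with hg
  set F : Finset V := (P'.parts \ P.parts).biUnion g with hF
  have hsub : Sparsify G P' t \ Sparsify G P t ⊆ ↑F := by
    intro v hv
    obtain ⟨hv', hvn⟩ := hv
    have hvF : v ∈ F := by
      rcases hv' with ⟨A, hA, hvA, hAcard⟩ | ⟨A, hA, hAcard, hvc⟩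
      · refine Finset.mem_biUnion.2 ⟨A, ?_, ?_⟩
        · exact Finset.mem_sdiff.2 ⟨hA, fun hAP => hvn (Or.inl ⟨A, hAP, hvA, hAcard⟩)⟩
        · rw [hg]; simp only; rw [if_pos hAcard]; exact hvA
      · refine Finset.mem_biUnion.2 ⟨A, ?_, ?_⟩
        · exact Finset.mem_sdiff.2 ⟨hA, fun hAP => hvn (Or.inr ⟨A, hAP, hAcard, hvc⟩)⟩
        · rw [hg]; simp only; rw [if_neg (not_lt.2 hAcard)]
          exact Finset.mem_filter.2 ⟨Finset.mem_univ v, hvc⟩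
    exact hvF
  have hbound : ∀ A ∈ P'.parts \ P.parts, (g A).card ≤ t ^ 2 - 1 := by
    intro A _
    rw [hg]
    simp only
    split_ifs with h
    · omega
    · have h1 := tComplete_card_lt hG ht (not_lt.1 h)
      have ht2 : t ≤ t ^ 2 := by nlinarith
      omega
  have hFcard : F.card ≤ 2 * (t ^ 2 - 1) := by
    calc F.card ≤ ∑ A ∈ P'.parts \ P.parts, (g A).card := Finset.card_biUnion_le
      _ ≤ ∑ _A ∈ P'.parts \ P.parts, (t ^ 2 - 1) := Finset.sum_le_sum hbound
      _ = (P'.parts \ P.parts).card * (t ^ 2 - 1) := by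
          rw [Finset.sum_const, smul_eq_mul]
      _ ≤ 2 * (t ^ 2 - 1) := Nat.mul_le_mul_right _ hJ2
  have hle := Set.ncard_le_ncard hsub (Finset.finite_toSet F)
  rw [Set.ncard_coe_finset] at hle
  have ht1 : 1 ≤ t ^ 2 := Nat.one_le_pow _ _ ht
  omega
end

section
/- Let G be a K_{t,t}-free simple graph, let 𝒫 be a partition of V(G), and let H be any 𝒫-flip of G. Then for every edge uv of G with both endpoints outside Sparsify(G, 𝒫, t), the distance between u and v in H is at most 3. -/
open Finset

variable {V : Type*}

/-- `H` is a `𝒫`-flip of `G`: the adjacency of a pair of distinct vertices is complemented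
iff the (unordered) pair of parts containing them is among the flipped pairs. -/
def IsPFlip [Fintype V] [DecidableEq V] (P : Finpartition (Finset.univ : Finset V))
    (G H : SimpleGraph V) : Prop :=
  ∃ f : Finset V → Finset V → Bool, (∀ A B, f A B = f B A) ∧
    ∀ u v : V, u ≠ v → ∀ A ∈ P.parts, ∀ B ∈ P.parts, u ∈ A → v ∈ B →
      (H.Adj u v ↔ Xor' (G.Adj u v) (f A B = true))

/-- `H` is a `k`-flip of `G`: a `𝒫`-flip for some partition with at most `k` parts. -/
def IsKFlip [Fintype V] [DecidableEq V] (k : ℕ) (G H : SimpleGraph V) : Prop :=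
  ∃ P : Finpartition (Finset.univ : Finset V), P.parts.card ≤ k ∧ IsPFlip P G H

lemma exists_nonadj {t : ℕ} {G : SimpleGraph V} (hG : KttFree t G)
    {Nu Nv : Finset V} [DecidableEq V] (h1 : t ≤ Nu.card) (h2 : t ≤ Nv.card) :
    ∃ x ∈ Nu, ∃ y ∈ Nv, ¬ G.Adj x y := by
  by_cases hint : (Nu ∩ Nv).Nonempty
  · obtain ⟨x, hx⟩ := hint
    exact ⟨x, Finset.mem_of_mem_inter_left hx, x, Finset.mem_of_mem_inter_right hx,
      G.irrefl⟩
  · by_contra h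
    push_neg at h
    obtain ⟨X, hXsub, hX⟩ := Finset.exists_subset_card_eq h1
    obtain ⟨Y, hYsub, hY⟩ := Finset.exists_subset_card_eq h2
    refine hG ⟨X, Y, ?_, hX, hY, fun a ha b hb => h a (hXsub ha) b (hYsub hb)⟩
    have hd : Disjoint Nu Nv := by
      rw [Finset.disjoint_iff_inter_eq_empty, ← Finset.not_nonempty_iff_eq_empty]
      exact hint
    exact hd.mono hXsub hYsub

lemma ncard_nonadj [Fintype V] [DecidableEq V] (G : SimpleGraph V) [DecidableRel G.Adj]
    (u : V) (B : Finset V) :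
    ((B : Set V) \ {x | G.Adj u x}).ncard = (B.filter fun x => ¬ G.Adj u x).card := by
  rw [← Set.ncard_coe_finset]
  congr 1
  ext x
  simp [and_comm]

/-- For a `K_{t,t}`-free graph `G`, a partition `𝒫`, and any `𝒫`-flip `H`,
every edge `uv` of `G` with both endpoints outside `Sparsify(G,𝒫,t)` has distance at most
`3` in `H`. -/
theorem stmt3 [Fintype V] [DecidableEq V] (t : ℕ) (G H : SimpleGraph V)
    (hG : KttFree t G) (P : Finpartition (Finset.univ : Finset V))
    (hflip : IsPFlip P G H) (u v : V) (huv : G.Adj u v)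
    (hu : u ∉ Sparsify G P t) (hv : v ∉ Sparsify G P t) :
    ∃ p : H.Walk u v, p.length ≤ 3 := by
  classical
  obtain ⟨f, hsymm, hf⟩ := hflip
  obtain ⟨A, hA, huA⟩ := P.exists_mem (Finset.mem_univ u)
  obtain ⟨B, hB, hvB⟩ := P.exists_mem (Finset.mem_univ v)
  simp only [Sparsify, Set.mem_setOf_eq, not_or, not_exists] at hu hv
  push_neg at hu hv
  have hAcard : t ^ 2 ≤ A.card := hu.1 A hA huA
  have hBcard : t ^ 2 ≤ B.card := hv.1 B hB hvB
  have hNu : t ≤ (B.filter fun x => ¬ G.Adj u x).card := by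
    have := hu.2 B hB hBcard
    rw [tComplete, not_lt, ncard_nonadj] at this
    exact this
  have hNv : t ≤ (A.filter fun x => ¬ G.Adj v x).card := by
    have := hv.2 A hA hAcard
    rw [tComplete, not_lt, ncard_nonadj] at this
    exact this
  by_cases hfAB : f A B = true
  · -- flipped case
    have hadj : ∀ p q : V, p ∈ A → q ∈ B → p ≠ q → ¬ G.Adj p q → H.Adj p q := by
      intro p q hp hq hpq hnadj
      rw [hf p q hpq A hA B hB hp hq]
      simp [Xor', hnadj, hfAB]
    obtain ⟨x, hx, y, hy, hxy⟩ := exists_nonadj hG hNu hNv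
    rw [Finset.mem_filter] at hx hy
    obtain ⟨hxB, hux⟩ := hx
    obtain ⟨hyA, hvy⟩ := hy
    have huNv : u ∉ A.filter fun x => ¬ G.Adj v x := by
      simp [huv.symm]
    have hvNu : v ∉ B.filter fun x => ¬ G.Adj u x := by
      simp [huv]
    have hyu : y ≠ u := by rintro rfl; exact huNv (Finset.mem_filter.2 ⟨hyA, hvy⟩)
    have hxv : x ≠ v := by rintro rfl; exact hvNu (Finset.mem_filter.2 ⟨hxB, hux⟩)
    by_cases hxu : x = u
    · -- then u ∈ B, so A = B; walk u - y - v
      have huB : u ∈ B := hxu ▸ hxB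
      have huy : ¬ G.Adj u y := hxu ▸ hxy
      have hAB : A = B := P.eq_of_mem_parts hA hB huA huB
      have hyv : y ≠ v := by rintro rfl; exact huy huv
      have h1 : H.Adj u y := hadj u y huA (hAB ▸ hyA) hyu.symm huy
      have h2 : H.Adj y v := hadj y v hyA hvB hyv (fun h => hvy h.symm)
      exact ⟨SimpleGraph.Walk.cons h1 (SimpleGraph.Walk.cons h2 SimpleGraph.Walk.nil),
        by simp⟩
    · by_cases hyv : y = v
      · -- then v ∈ A, A = B; walk u - x - v
        have hvA : v ∈ A := hyv ▸ hyA
        have hxv' : ¬ G.Adj x v := hyv ▸ hxy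
        have h1 : H.Adj u x := hadj u x huA hxB (Ne.symm hxu) hux
        have h2 : H.Adj x v := by
          have hAB : A = B := P.eq_of_mem_parts hA hB hvA hvB
          exact hadj x v (hAB ▸ hxB) hvB hxv hxv'
        exact ⟨SimpleGraph.Walk.cons h1 (SimpleGraph.Walk.cons h2 SimpleGraph.Walk.nil),
          by simp⟩
      · have h1 : H.Adj u x := hadj u x huA hxB (Ne.symm hxu) hux
        by_cases hxyeq : x = y
        · -- walk u - x - v
          have hxA : x ∈ A := hxyeq ▸ hyA
          have h2 : H.Adj x v := hadj x v hxA hvB hxv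
            (fun h => hvy ((hxyeq ▸ h : G.Adj y v)).symm)
          exact ⟨SimpleGraph.Walk.cons h1 (SimpleGraph.Walk.cons h2 SimpleGraph.Walk.nil),
            by simp⟩
        · -- walk u - x - y - v
          have h2 : H.Adj x y := (hadj y x hyA hxB (Ne.symm hxyeq)
            (fun h => hxy h.symm)).symm
          have h3 : H.Adj y v := hadj y v hyA hvB hyv (fun h => hvy h.symm)
          exact ⟨SimpleGraph.Walk.cons h1 (SimpleGraph.Walk.cons h2
            (SimpleGraph.Walk.cons h3 SimpleGraph.Walk.nil)), by simp⟩
  · -- not flipped: u v adjacent in H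
    have h1 : H.Adj u v := by
      rw [hf u v huv.ne A hA B hB huA hvB]
      simp [Xor', huv, hfAB]
    exact ⟨SimpleGraph.Walk.cons h1 SimpleGraph.Walk.nil, by simp⟩
end

section
/- Let G be a K_{t,t}-free simple graph and 𝒫 a partition of V(G). Then there exists a set S ⊆ V(G) with |S| ≤ |𝒫| · t² such that for every 𝒫-flip G' of G and all vertices u, v ∉ S, dist_{G\S}(u,v) ≥ (1/3)·dist_{G'}(u,v), i.e., 3·dist_{G\S}(u,v) ≥ dist_{G'}(u,v) whenever u and v are connected in G\S. -/
open Finset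

variable {V : Type*}

/-- The graph obtained from `G` by deleting (isolating) the vertices of `S`. -/
def SimpleGraph.deleteSet (G : SimpleGraph V) (S : Set V) : SimpleGraph V where
  Adj u v := G.Adj u v ∧ u ∉ S ∧ v ∉ S
  symm := ⟨fun u v ⟨h, hu, hv⟩ => ⟨h.symm, hv, hu⟩⟩
  loopless := ⟨fun v h => G.loopless.irrefl v h.1⟩

section Aux

open scoped Classical

variable [Fintype V] [DecidableEq V]

/-- The set of non-neighbors of `v` inside `A`, as a finset. -/
noncomputable def nonNbrs (G : SimpleGraph V) (v : V) (A : Finset V) : Finset V :=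
  A.filter fun u => ¬ G.Adj v u

lemma ncard_eq_nonNbrs_card (G : SimpleGraph V) (v : V) (A : Finset V) :
    ((A : Set V) \ {u | G.Adj v u}).ncard = (nonNbrs G v A).card := by
  rw [show ((A : Set V) \ {u | G.Adj v u}) = ↑(nonNbrs G v A) by
    ext x; simp [nonNbrs], Set.ncard_coe_finset]

lemma mem_nonNbrs {G : SimpleGraph V} {v x : V} {A : Finset V} :
    x ∈ nonNbrs G v A ↔ x ∈ A ∧ ¬ G.Adj v x := Finset.mem_filter

lemma nonNbrs_card_of_not_tComplete {G : SimpleGraph V} {t : ℕ} {v : V} {A : Finset V}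
    (h : ¬ tComplete G t v A) : t ≤ (nonNbrs G v A).card := by
  rw [tComplete, ncard_eq_nonNbrs_card] at h
  omega

lemma nonNbrs_card_of_tComplete {G : SimpleGraph V} {t : ℕ} {v : V} {A : Finset V}
    (h : tComplete G t v A) : (nonNbrs G v A).card < t := by
  rwa [tComplete, ncard_eq_nonNbrs_card] at h

/-- If `A` is big, few vertices are `t`-complete to it. -/
lemma card_tComplete_lt {t : ℕ} {G : SimpleGraph V} (hG : KttFree t G) (ht : 0 < t)
    {A : Finset V} (hA : t ^ 2 < A.card) :
    (Finset.univ.filter fun v => tComplete G t v A).card < t := by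
  by_contra h
  push_neg at h
  obtain ⟨W, hWsub, hWcard⟩ := Finset.exists_subset_card_eq h
  set C : Finset V := A.filter (fun b => ∀ w ∈ W, G.Adj w b) with hC
  have hsub : A \ C ⊆ W.biUnion fun w => nonNbrs G w A := by
    intro b hb
    simp only [hC, mem_sdiff, mem_filter, not_and, not_forall] at hb
    obtain ⟨hbA, hb2⟩ := hb
    obtain ⟨w, hw, hnadj⟩ := hb2 hbA
    exact Finset.mem_biUnion.2 ⟨w, hw, by simp [nonNbrs, hbA, hnadj]⟩
  have hsum : (A \ C).card ≤ t * (t - 1) := by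
    calc (A \ C).card ≤ (W.biUnion fun w => nonNbrs G w A).card := Finset.card_le_card hsub
    _ ≤ ∑ w ∈ W, (nonNbrs G w A).card := Finset.card_biUnion_le
    _ ≤ W.card * (t - 1) := by
        refine Finset.sum_le_card_nsmul _ _ _ fun w hw => ?_
        have := nonNbrs_card_of_tComplete (Finset.mem_filter.1 (hWsub hw)).2
        omega
    _ = t * (t - 1) := by rw [hWcard]
  have hCsub : C ⊆ A := Finset.filter_subset _ _
  have hCcard : t ≤ C.card := by
    have h1 := Finset.card_sdiff_of_subset hCsub
    have ht2 : t ^ 2 = t * t := sq t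
    have hmul : t * (t - 1) + t = t * t := by
      rcases t with _ | n
      · omega
      · simp only [Nat.succ_sub_one]; ring
    have hCA := Finset.card_le_card hCsub
    omega
  obtain ⟨B', hB'sub, hB'card⟩ := Finset.exists_subset_card_eq hCcard
  refine hG ⟨W, B', ?_, hWcard, hB'card, ?_⟩
  · rw [Finset.disjoint_left]
    intro w hwW hwB'
    exact G.loopless.irrefl w ((Finset.mem_filter.1 (hB'sub hwB')).2 w hwW)
  · intro a ha b hb
    exact (Finset.mem_filter.1 (hB'sub hb)).2 a ha

/-- The set `S` of the sparsification lemma. -/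
noncomputable def flipBlocker (G : SimpleGraph V) (t : ℕ)
    (P : Finpartition (Finset.univ : Finset V)) : Finset V :=
  P.parts.biUnion fun A =>
    if A.card ≤ t ^ 2 then A else Finset.univ.filter fun v => tComplete G t v A

lemma flipBlocker_card {G : SimpleGraph V} {t : ℕ} (hG : KttFree t G) (ht : 0 < t)
    (P : Finpartition (Finset.univ : Finset V)) :
    (flipBlocker G t P).card ≤ P.parts.card * t ^ 2 := by
  calc (flipBlocker G t P).card
      ≤ ∑ A ∈ P.parts, (if A.card ≤ t ^ 2 then A
          else Finset.univ.filter fun v => tComplete G t v A).card := Finset.card_biUnion_le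
    _ ≤ P.parts.card * t ^ 2 := by
        refine Finset.sum_le_card_nsmul _ _ _ fun A hA => ?_
        by_cases h : A.card ≤ t ^ 2
        · simpa [h] using h
        · rw [if_neg h]
          push_neg at h
          have h1 := card_tComplete_lt hG ht h
          have h2 : t ≤ t ^ 2 := by nlinarith
          omega

lemma not_tComplete_of_not_mem_flipBlocker {G : SimpleGraph V} {t : ℕ}
    {P : Finpartition (Finset.univ : Finset V)} {A : Finset V} (hA : A ∈ P.parts)
    (hbig : t ^ 2 < A.card) {v : V} (hv : v ∉ flipBlocker G t P) :
    ¬ tComplete G t v A := by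
  intro hc
  exact hv (Finset.mem_biUnion.2 ⟨A, hA, by
    rw [if_neg (by omega)]; exact Finset.mem_filter.2 ⟨Finset.mem_univ v, hc⟩⟩)

lemma big_of_not_mem_flipBlocker {G : SimpleGraph V} {t : ℕ}
    {P : Finpartition (Finset.univ : Finset V)} {A : Finset V} (hA : A ∈ P.parts)
    {v : V} (hvA : v ∈ A) (hv : v ∉ flipBlocker G t P) : t ^ 2 < A.card := by
  by_contra h
  push_neg at h
  exact hv (Finset.mem_biUnion.2 ⟨A, hA, by rw [if_pos h]; exact hvA⟩)

/-- The key step: an edge of `G` outside `S` gives a walk of length at most 3 in any flip. -/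
lemma short_walk {t : ℕ} {G G' : SimpleGraph V} (hG : KttFree t G)
    {P : Finpartition (Finset.univ : Finset V)}
    {f : Finset V → Finset V → Bool} (hsym : ∀ A B, f A B = f B A)
    (hf : ∀ u v : V, u ≠ v → ∀ A ∈ P.parts, ∀ B ∈ P.parts, u ∈ A → v ∈ B →
      (G'.Adj u v ↔ Xor' (G.Adj u v) (f A B = true)))
    {u v : V} {A B : Finset V} (hA : A ∈ P.parts) (hB : B ∈ P.parts)
    (huA : u ∈ A) (hvB : v ∈ B) (huv : G.Adj u v)
    (hvc : ¬ tComplete G t v A) (huc : ¬ tComplete G t u B) :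
    ∃ p : G'.Walk u v, p.length ≤ 3 := by
  have hne : u ≠ v := huv.ne
  by_cases hfAB : f A B = true
  case neg =>
    -- the pair is not flipped: the edge survives
    have : G'.Adj u v := (hf u v hne A hA B hB huA hvB).2 (Or.inl ⟨huv, hfAB⟩)
    exact ⟨SimpleGraph.Walk.cons this SimpleGraph.Walk.nil, by simp⟩
  case pos =>
  have hXcard : t ≤ (nonNbrs G v A).card := nonNbrs_card_of_not_tComplete hvc
  have hYcard : t ≤ (nonNbrs G u B).card := nonNbrs_card_of_not_tComplete huc
  rcases eq_or_ne A B with rfl | hAB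
  · -- same part
    have key : ∀ a b : V, a ≠ b → ¬ G.Adj a b → a ∈ A → b ∈ A → G'.Adj a b :=
      fun a b hne hn ha hb => (hf a b hne A hA A hA ha hb).2 (Or.inr ⟨hfAB, hn⟩)
    by_cases hXY : ∃ x, x ∈ nonNbrs G v A ∩ nonNbrs G u A
    · obtain ⟨x, hx⟩ := hXY
      obtain ⟨hxX, hxY⟩ := Finset.mem_inter.1 hx
      obtain ⟨hxA, hxnv⟩ := mem_nonNbrs.1 hxX
      obtain ⟨-, hxnu⟩ := mem_nonNbrs.1 hxY
      have hxu : x ≠ u := by rintro rfl; exact hxnv huv.symm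
      have hxv : x ≠ v := by rintro rfl; exact hxnu huv
      have e1 : G'.Adj u x := key u x hxu.symm (fun h => hxnu h) huA hxA
      have e2 : G'.Adj x v := key x v hxv (fun h => hxnv h.symm) hxA hvB
      exact ⟨SimpleGraph.Walk.cons e1 (SimpleGraph.Walk.cons e2 SimpleGraph.Walk.nil), by simp⟩
    · push_neg at hXY
      have hdisj : Disjoint (nonNbrs G v A) (nonNbrs G u A) :=
        Finset.disjoint_left.2 fun x hx hy => hXY x (Finset.mem_inter.2 ⟨hx, hy⟩)
      obtain ⟨X', hX'sub, hX'card⟩ := Finset.exists_subset_card_eq hXcard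
      obtain ⟨Y', hY'sub, hY'card⟩ := Finset.exists_subset_card_eq hYcard
      have hdisj' : Disjoint X' Y' := hdisj.mono hX'sub hY'sub
      have hxy : ∃ x ∈ X', ∃ y ∈ Y', ¬ G.Adj x y := by
        by_contra hall
        push_neg at hall
        exact hG ⟨X', Y', hdisj', hX'card, hY'card, hall⟩
      obtain ⟨x, hxX', y, hyY', hnadj⟩ := hxy
      have hxX : x ∈ nonNbrs G v A := hX'sub hxX'
      have hyY : y ∈ nonNbrs G u A := hY'sub hyY'
      obtain ⟨hxA, hxnv⟩ := mem_nonNbrs.1 hxX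
      obtain ⟨hyA, hynu⟩ := mem_nonNbrs.1 hyY
      have hxy' : x ≠ y := by rintro rfl; exact Finset.disjoint_left.1 hdisj hxX hyY
      have huY : u ∈ nonNbrs G u A := mem_nonNbrs.2 ⟨huA, G.loopless.irrefl u⟩
      have hvX : v ∈ nonNbrs G v A := mem_nonNbrs.2 ⟨hvB, G.loopless.irrefl v⟩
      have hxu : x ≠ u := by rintro rfl; exact Finset.disjoint_left.1 hdisj hxX huY
      have hyv : y ≠ v := by rintro rfl; exact Finset.disjoint_left.1 hdisj hvX hyY
      by_cases hxv : x = v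
      · have hyu : y ≠ u := by rintro rfl; rw [hxv] at hnadj; exact hnadj huv.symm
        have e1 : G'.Adj u y := key u y hyu.symm (fun h => hynu h) huA hyA
        have e2 : G'.Adj y v := key y v hyv (fun h => hnadj (by rw [hxv]; exact h.symm)) hyA hvB
        exact ⟨SimpleGraph.Walk.cons e1 (SimpleGraph.Walk.cons e2 SimpleGraph.Walk.nil), by simp⟩
      · by_cases hyu : y = u
        · have e1 : G'.Adj u x :=
            key u x hxu.symm (fun h => hnadj (by rw [hyu]; exact h.symm)) huA hxA
          have e2 : G'.Adj x v := key x v hxv (fun h => hxnv h.symm) hxA hvB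
          exact ⟨SimpleGraph.Walk.cons e1 (SimpleGraph.Walk.cons e2 SimpleGraph.Walk.nil), by simp⟩
        · have e1 : G'.Adj u y := key u y (Ne.symm hyu) (fun h => hynu h) huA hyA
          have e2 : G'.Adj y x := key y x hxy'.symm (fun h => hnadj h.symm) hyA hxA
          have e3 : G'.Adj x v := key x v hxv (fun h => hxnv h.symm) hxA hvB
          exact ⟨SimpleGraph.Walk.cons e1 (SimpleGraph.Walk.cons e2
            (SimpleGraph.Walk.cons e3 SimpleGraph.Walk.nil)), by simp⟩
  · -- different parts
    have hdAB : Disjoint A B :=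
      P.disjoint (Finset.mem_coe.2 hA) (Finset.mem_coe.2 hB) hAB
    have hfBA : f B A = true := by rw [hsym B A]; exact hfAB
    have keyAB : ∀ a b : V, a ∈ A → b ∈ B → ¬ G.Adj a b → G'.Adj a b := by
      intro a b ha hb hn
      have hab : a ≠ b := by rintro rfl; exact Finset.disjoint_left.1 hdAB ha hb
      exact (hf a b hab A hA B hB ha hb).2 (Or.inr ⟨hfAB, hn⟩)
    have keyBA : ∀ a b : V, a ∈ B → b ∈ A → ¬ G.Adj a b → G'.Adj a b := by
      intro a b ha hb hn
      have hab : a ≠ b := by rintro rfl; exact Finset.disjoint_left.1 hdAB hb ha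
      exact (hf a b hab B hB A hA ha hb).2 (Or.inr ⟨hfBA, hn⟩)
    have hdisj : Disjoint (nonNbrs G v A) (nonNbrs G u B) :=
      hdAB.mono (Finset.filter_subset _ _) (Finset.filter_subset _ _)
    obtain ⟨X', hX'sub, hX'card⟩ := Finset.exists_subset_card_eq hXcard
    obtain ⟨Y', hY'sub, hY'card⟩ := Finset.exists_subset_card_eq hYcard
    have hdisj' : Disjoint X' Y' := hdisj.mono hX'sub hY'sub
    have hxy : ∃ x ∈ X', ∃ y ∈ Y', ¬ G.Adj x y := by
      by_contra hall
      push_neg at hall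
      exact hG ⟨X', Y', hdisj', hX'card, hY'card, hall⟩
    obtain ⟨x, hxX', y, hyY', hnadj⟩ := hxy
    obtain ⟨hxA, hxnv⟩ := mem_nonNbrs.1 (hX'sub hxX')
    obtain ⟨hyB, hynu⟩ := mem_nonNbrs.1 (hY'sub hyY')
    have e1 : G'.Adj u y := keyAB u y huA hyB (fun h => hynu h)
    have e2 : G'.Adj y x := keyBA y x hyB hxA (fun h => hnadj h.symm)
    have e3 : G'.Adj x v := keyAB x v hxA hvB (fun h => hxnv h.symm)
    exact ⟨SimpleGraph.Walk.cons e1 (SimpleGraph.Walk.cons e2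
      (SimpleGraph.Walk.cons e3 SimpleGraph.Walk.nil)), by simp⟩

end Aux

/-- Flip sparsification lemma: for every `K_{t,t}`-free graph `G` and
partition `𝒫` there is a set `S` of at most `|𝒫| · t²` vertices such that for every
`𝒫`-flip `G'` of `G` and all `u, v ∉ S` that are connected in `G \ S`, the vertices are
reachable in `G'` and `dist_{G'}(u,v) ≤ 3 · dist_{G\S}(u,v)`. -/
theorem stmt4 [Fintype V] [DecidableEq V] (t : ℕ) (G : SimpleGraph V)
    (hG : KttFree t G) (P : Finpartition (Finset.univ : Finset V)) :
    ∃ S : Finset V, S.card ≤ P.parts.card * t ^ 2 ∧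
      ∀ G' : SimpleGraph V, IsPFlip P G G' →
        ∀ u v : V, u ∉ S → v ∉ S → (G.deleteSet ↑S).Reachable u v →
          G'.Reachable u v ∧ G'.dist u v ≤ 3 * (G.deleteSet ↑S).dist u v := by
  classical
  obtain rfl | ht := Nat.eq_zero_or_pos t
  · exact absurd ⟨∅, ∅, disjoint_empty_left _, rfl, rfl, by simp⟩ hG
  refine ⟨flipBlocker G t P, flipBlocker_card hG ht P, ?_⟩
  rintro G' ⟨f, hsym, hf⟩ u v hu hv hreach
  have hedge : ∀ a b : V, (G.deleteSet ↑(flipBlocker G t P)).Adj a b →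
      ∃ q : G'.Walk a b, q.length ≤ 3 := by
    rintro a b ⟨hab, haS, hbS⟩
    simp only [Finset.mem_coe] at haS hbS
    obtain ⟨A, hA, haA⟩ := P.exists_mem (Finset.mem_univ a)
    obtain ⟨B, hB, hbB⟩ := P.exists_mem (Finset.mem_univ b)
    have hAbig := big_of_not_mem_flipBlocker hA haA haS
    have hBbig := big_of_not_mem_flipBlocker hB hbB hbS
    exact short_walk hG hsym hf hA hB haA hbB hab
      (not_tComplete_of_not_mem_flipBlocker hA hAbig hbS)
      (not_tComplete_of_not_mem_flipBlocker hB hBbig haS)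
  have lift : ∀ {a b : V} (p : (G.deleteSet ↑(flipBlocker G t P)).Walk a b),
      ∃ q : G'.Walk a b, q.length ≤ 3 * p.length := by
    intro a b p
    induction p with
    | nil => exact ⟨SimpleGraph.Walk.nil, by simp⟩
    | cons h p ih =>
      obtain ⟨q1, hq1⟩ := hedge _ _ h
      obtain ⟨q2, hq2⟩ := ih
      refine ⟨q1.append q2, ?_⟩
      rw [SimpleGraph.Walk.length_append, SimpleGraph.Walk.length_cons]
      omega
  obtain ⟨p, hp⟩ := hreach.exists_walk_length_eq_dist
  obtain ⟨q, hq⟩ := lift p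
  exact ⟨⟨q⟩, by calc G'.dist u v ≤ q.length := SimpleGraph.dist_le q
    _ ≤ 3 * p.length := hq
    _ = _ := by rw [hp]⟩
end

section
/- For every finite graph G, every vertex ordering ≤, every r ∈ ℕ with r ≥ 1, and every vertex v: sreach_r(v) ⊆ sep_r(v / S_{<v}) ∪ {v}, where S_{<v} is the set of vertices strictly smaller than v. Consequently scol_r(G) ≤ sw_r(G) + 1. -/
open Finset

variable {V : Type*}

/-- The `r`-separator of `v` in `S`: vertices of `S` reachable from `v` by a path of
length at most `r` whose internal vertices avoid `S`. -/
def sepSet (G : SimpleGraph V) (r : ℕ) (v : V) (S : Set V) : Set V :=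
  {u | u ∈ S ∧ ∃ p : G.Walk v u, p.length ≤ r ∧
        ∀ x ∈ p.support, x ≠ v → x ≠ u → x ∉ S}

/-- `S` is downward closed for the vertex ordering `ord`. -/
def DownClosed (ord : V → ℕ) (S : Set V) : Prop :=
  ∀ ⦃u v : V⦄, ord u ≤ ord v → v ∈ S → u ∈ S

/-- The ordering `ord` witnesses radius-`r` separation-width at most `k`. -/
def SWOrd (G : SimpleGraph V) (r : ℕ) (ord : V → ℕ) (k : ℕ) : Prop :=
  ∀ S : Set V, DownClosed ord S → ∀ v ∉ S, (sepSet G r v S).ncard ≤ k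

/-- The radius-`r` separation-width of `G`. -/
noncomputable def sepWidth [Fintype V] (G : SimpleGraph V) (r : ℕ) : ℕ :=
  sInf {k | ∃ ord : V → ℕ, Function.Injective ord ∧ SWOrd G r ord k}

/-- Vertices strongly `r`-reachable from `v` with respect to the ordering `ord`:
vertices `u ≤ v` joined to `v` by a path of length at most `r` all of whose internal
vertices are strictly greater than `v`. -/
def sreachSet (G : SimpleGraph V) (r : ℕ) (ord : V → ℕ) (v : V) : Set V :=
  {u | ord u ≤ ord v ∧ ∃ p : G.Walk v u, p.length ≤ r ∧
        ∀ x ∈ p.support, x ≠ v → x ≠ u → ord v < ord x}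

/-- The strong `r`-coloring number of `G`. -/
noncomputable def scol [Fintype V] (G : SimpleGraph V) (r : ℕ) : ℕ :=
  sInf {k | ∃ ord : V → ℕ, Function.Injective ord ∧
              ∀ v : V, (sreachSet G r ord v).ncard ≤ k}

/-- For every ordering and every vertex `v`,
`sreach_r(v) ⊆ sep_r(v / S_{<v}) ∪ {v}`; consequently `scol_r(G) ≤ sw_r(G) + 1`. -/
theorem stmt8 [Fintype V] (G : SimpleGraph V) (r : ℕ) (hr : 1 ≤ r) :
    (∀ ord : V → ℕ, Function.Injective ord → ∀ v : V,
        sreachSet G r ord v ⊆ sepSet G r v {u | ord u < ord v} ∪ {v}) ∧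
    scol G r ≤ sepWidth G r + 1 := by
  have key : ∀ ord : V → ℕ, Function.Injective ord → ∀ v : V,
      sreachSet G r ord v ⊆ sepSet G r v {u | ord u < ord v} ∪ {v} := by
    intro ord hinj v u hu
    obtain ⟨hle, p, hlen, hint⟩ := hu
    by_cases huv : u = v
    · exact Or.inr huv
    · refine Or.inl ⟨lt_of_le_of_ne hle (fun h => huv (hinj h)), p, hlen, ?_⟩
      intro x hx hxv hxu hxS
      exact absurd hxS (not_lt_of_gt (hint x hx hxv hxu))
  refine ⟨key, ?_⟩
  obtain ⟨ord0, hord0⟩ := exists_injective_nat V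
  have hne : {k | ∃ ord : V → ℕ, Function.Injective ord ∧ SWOrd G r ord k}.Nonempty := by
    refine ⟨Fintype.card V, ord0, hord0, fun S _ v _ => ?_⟩
    calc (sepSet G r v S).ncard ≤ (Set.univ : Set V).ncard :=
          Set.ncard_le_ncard (Set.subset_univ _) Set.finite_univ
      _ = Fintype.card V := by rw [Set.ncard_univ, Nat.card_eq_fintype_card]
  obtain ⟨ord, hinj, hsw⟩ := Nat.sInf_mem hne
  refine Nat.sInf_le ⟨ord, hinj, fun v => ?_⟩
  have hS : DownClosed ord {u | ord u < ord v} := fun a b hab hb => lt_of_le_of_lt hab hb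
  have hvS : v ∉ {u | ord u < ord v} := by simp
  calc (sreachSet G r ord v).ncard
      ≤ (sepSet G r v {u | ord u < ord v} ∪ {v}).ncard :=
        Set.ncard_le_ncard (key ord hinj v) (Set.toFinite _)
    _ ≤ (sepSet G r v {u | ord u < ord v}).ncard + ({v} : Set V).ncard :=
        Set.ncard_union_le _ _
    _ ≤ sepWidth G r + 1 := by
        rw [Set.ncard_singleton]
        exact Nat.add_le_add_right (hsw _ hS v hvS) 1
end

section
/- For every finite graph G, the radius-∞ separation-width of G equals the tree-width of G: sw_∞(G) = tw(G). -/
open Finset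

variable {V : Type*}

/-- The `∞`-separator of `v` in `S`: vertices of `S` reachable from `v` by a path (of any
length) whose internal vertices avoid `S`. -/
def sepSetInf (G : SimpleGraph V) (v : V) (S : Set V) : Set V :=
  {u | u ∈ S ∧ ∃ p : G.Walk v u, ∀ x ∈ p.support, x ≠ v → x ≠ u → x ∉ S}

/-- The radius-`∞` separation-width of `G`. -/
noncomputable def sepWidthInf [Fintype V] (G : SimpleGraph V) : ℕ :=
  sInf {k | ∃ ord : V → ℕ, Function.Injective ord ∧
              ∀ S : Set V, DownClosed ord S → ∀ v ∉ S, (sepSetInf G v S).ncard ≤ k}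

/-- `G` has a tree decomposition of width at most `k`: a finite tree `T` with bags of
size at most `k + 1` covering all vertices and edges, such that for every vertex the set
of bags containing it induces a connected subtree. -/
def HasTreeDecompOfWidth (G : SimpleGraph V) (k : ℕ) : Prop :=
  ∃ (ι : Type) (_ : Fintype ι) (T : SimpleGraph ι) (_ : T.IsTree) (bag : ι → Set V),
    (∀ i, (bag i).ncard ≤ k + 1) ∧
    (∀ v : V, ∃ i, v ∈ bag i) ∧
    (∀ u v : V, G.Adj u v → ∃ i, u ∈ bag i ∧ v ∈ bag i) ∧
    (∀ v : V, (T.induce {i | v ∈ bag i}).Connected)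

/-- The tree-width of `G`. -/
noncomputable def treewidth [Fintype V] (G : SimpleGraph V) : ℕ :=
  sInf {k | HasTreeDecompOfWidth G k}

open SimpleGraph

namespace SWHelp

variable {W : Type*} {H : SimpleGraph W} {s : Set W}

def inducedHom (H : SimpleGraph W) (s : Set W) : H.induce s →g H :=
  ⟨Subtype.val, fun {a b} h => h⟩

lemma pack_walk {a b : W} (p : H.Walk a b) (hs : ∀ x ∈ p.support, x ∈ s)
    (ha : a ∈ s) (hb : b ∈ s) :
    ∃ q : (H.induce s).Walk ⟨a, ha⟩ ⟨b, hb⟩, q.support.map Subtype.val = p.support := by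
  induction p with
  | nil => exact ⟨Walk.nil, rfl⟩
  | @cons u c d h p ih =>
    have hc : c ∈ s := hs c (by simp [Walk.support_cons])
    have hs' : ∀ x ∈ p.support, x ∈ s := fun x hx => hs x (by simp [Walk.support_cons, hx])
    obtain ⟨q, hq⟩ := ih hs' hc hb
    exact ⟨Walk.cons (by exact h : (H.induce s).Adj ⟨u, ha⟩ ⟨c, hc⟩) q, by
      exact congrArg (List.cons u) hq⟩

lemma induce_connected_of_walks (hne : s.Nonempty)
    (h : ∀ a (_ : a ∈ s) b (_ : b ∈ s), ∃ p : H.Walk a b, ∀ x ∈ p.support, x ∈ s) :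
    (H.induce s).Connected := by
  have : Nonempty ↥s := ⟨⟨hne.choose, hne.choose_spec⟩⟩
  refine ⟨fun x y => ?_⟩
  obtain ⟨a, ha⟩ := x
  obtain ⟨b, hb⟩ := y
  obtain ⟨p, hp⟩ := h a ha b hb
  obtain ⟨q, -⟩ := pack_walk p hp ha hb
  exact q.reachable

lemma walks_of_induce_connected (hc : (H.induce s).Connected)
    {a b : W} (ha : a ∈ s) (hb : b ∈ s) :
    ∃ p : H.Walk a b, ∀ x ∈ p.support, x ∈ s := by
  obtain ⟨q⟩ := hc.preconnected ⟨a, ha⟩ ⟨b, hb⟩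
  refine ⟨q.map (inducedHom H s), fun x hx => ?_⟩
  have hsm := Walk.support_map (f := inducedHom H s) (p := q)
  replace hx : x ∈ List.map (inducedHom H s) q.support := by rw [← hsm]; exact hx
  obtain ⟨y, -, rfl⟩ := List.mem_map.1 hx
  exact y.2

/-- a tree with at least two vertices has a leaf -/
lemma exists_leaf {ι : Type*} [Fintype ι] (T : SimpleGraph ι) (hT : T.IsTree)
    (h2 : 2 ≤ Fintype.card ι) : ∃ ℓ p, T.Adj ℓ p ∧ T.neighborSet ℓ = {p} := by
  classical
  have hconn := ((isTree_iff T).1 hT).1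
  have hdegpos : ∀ i, 0 < T.degree i := by
    intro i
    rw [degree_pos_iff_exists_adj]
    obtain ⟨j, hj⟩ := Fintype.exists_ne_of_one_lt_card (by omega) i
    obtain ⟨w⟩ := hconn.preconnected i j
    obtain ⟨z, hz, -, -⟩ := Walk.exists_eq_cons_of_ne (Ne.symm hj) w
    exact ⟨z, hz⟩
  have hE : T.edgeFinset.card + 1 = Fintype.card ι := hT.card_edgeFinset
  have : ∃ ℓ, T.degree ℓ ≤ 1 := by
    by_contra hcon
    push_neg at hcon
    have hsum := T.sum_degrees_eq_twice_card_edges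
    have h1 : ∀ i ∈ (univ : Finset ι), 2 ≤ T.degree i := fun i _ => hcon i
    have h2' : (univ : Finset ι).card * 2 ≤ ∑ i, T.degree i := by
      calc (univ : Finset ι).card * 2 = ∑ _i ∈ (univ : Finset ι), 2 := by
            rw [Finset.sum_const, smul_eq_mul]
          _ ≤ ∑ i, T.degree i := Finset.sum_le_sum h1
    rw [Finset.card_univ] at h2'
    omega
  obtain ⟨ℓ, hℓ⟩ := this
  have hdeg : T.degree ℓ = 1 := le_antisymm hℓ (hdegpos ℓ)
  rw [← card_neighborFinset_eq_degree, Finset.card_eq_one] at hdeg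
  obtain ⟨p, hp⟩ := hdeg
  have hadj : T.Adj ℓ p := by
    rw [← mem_neighborFinset, hp]; exact Finset.mem_singleton_self p
  refine ⟨ℓ, p, hadj, ?_⟩
  ext x
  rw [mem_neighborSet, ← mem_neighborFinset, hp]
  simp

/-- a path between non-leaf endpoints avoids the leaf -/
lemma leaf_not_mem_path {ι : Type*} {T : SimpleGraph ι} {ℓ p0 : ι}
    (hnb : T.neighborSet ℓ = {p0}) {a b : ι} (q : T.Walk a b) (hq : q.IsPath)
    (ha : a ≠ ℓ) (hb : b ≠ ℓ) : ℓ ∉ q.support := by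
  classical
  intro h
  have hspec := q.take_spec h
  have hqp : ((q.takeUntil ℓ h).append (q.dropUntil ℓ h)).IsPath := by rwa [hspec]
  have hnodup := hqp.support_nodup
  rw [Walk.support_append] at hnodup
  have hdisj := List.disjoint_of_nodup_append hnodup
  obtain ⟨x, hx, r1, hr1⟩ := Walk.exists_eq_cons_of_ne (Ne.symm ha) (q.takeUntil ℓ h).reverse
  obtain ⟨y, hy, r2, hr2⟩ := Walk.exists_eq_cons_of_ne (Ne.symm hb) (q.dropUntil ℓ h)
  have hxp : x = p0 := by
    have : x ∈ T.neighborSet ℓ := hx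
    rwa [hnb] at this
  have hyp : y = p0 := by
    have : y ∈ T.neighborSet ℓ := hy
    rwa [hnb] at this
  have hxmem : x ∈ (q.takeUntil ℓ h).support := by
    have : x ∈ ((q.takeUntil ℓ h).reverse).support := by
      rw [hr1]; simp [Walk.support_cons, Walk.start_mem_support]
    rwa [Walk.support_reverse, List.mem_reverse] at this
  have hymem : y ∈ (q.dropUntil ℓ h).support.tail := by
    rw [hr2]; simp [Walk.support_cons, Walk.start_mem_support]
  exact hdisj (hxp ▸ hxmem) (hyp ▸ hymem)

/-- any walk into a leaf passes its unique neighbour -/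
lemma passes_nbr {ι : Type*} {T : SimpleGraph ι} {ℓ p0 : ι}
    (hnb : T.neighborSet ℓ = {p0}) {i : ι} (hne : i ≠ ℓ) (w : T.Walk i ℓ) :
    p0 ∈ w.support := by
  obtain ⟨z, hz, r, hr⟩ := Walk.exists_eq_cons_of_ne (Ne.symm hne) w.reverse
  have hzp : z = p0 := by
    have : z ∈ T.neighborSet ℓ := hz
    rwa [hnb] at this
  have : z ∈ w.reverse.support := by rw [hr]; simp [Walk.support_cons, Walk.start_mem_support]
  rw [Walk.support_reverse, List.mem_reverse] at this
  exact hzp ▸ this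

/-- removing a leaf from a tree leaves a tree -/
lemma isTree_delete_leaf {ι : Type*} {T : SimpleGraph ι} (hT : T.IsTree) {ℓ p0 : ι}
    (hadj : T.Adj ℓ p0) (hnb : T.neighborSet ℓ = {p0}) :
    (T.induce ({ℓ}ᶜ : Set ι)).IsTree := by
  classical
  rw [isTree_iff]
  constructor
  · apply induce_connected_of_walks ⟨p0, by simp [hadj.ne']⟩
    intro a ha b hb
    obtain ⟨w⟩ := ((isTree_iff T).1 hT).1.preconnected a b
    refine ⟨w.toPath, fun x hx => ?_⟩
    have hnotin := leaf_not_mem_path hnb (w.toPath : T.Walk a b) w.toPath.2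
      (by simpa using ha) (by simpa using hb)
    simp only [Set.mem_compl_iff, Set.mem_singleton_iff]
    intro hxl
    exact hnotin (hxl ▸ hx)
  · intro v c hc
    have := (Walk.map_isCycle_iff_of_injective
      (f := inducedHom T ({ℓ}ᶜ : Set ι)) Subtype.val_injective).2 hc
    exact ((isTree_iff T).1 hT).2 _ this

variable {V : Type*} {G : SimpleGraph V} {B X : Set V}
variable {G' : SimpleGraph ↥(Xᶜ)}

section shortcut

/-- exit lemma: a walk from inside X to outside S-free exits through B -/
lemma exitX (hedge : ∀ {a x : V}, G.Adj a x → x ∈ X → a ∈ B) (S : Set V) :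
    ∀ {d u : V} (r : G.Walk d u), d ∈ X → u ∉ X →
    (∀ x ∈ r.support, x ∉ S ∨ x = u) →
    ∃ (z : V) (_ : z ∉ X) (r' : G.Walk z u), z ∈ B ∧
      (∀ x ∈ r'.support, x ∉ S ∨ x = u) ∧ r'.length ≤ r.length := by
  intro d u r
  induction r with
  | nil => intro hd hu _; exact absurd hd hu
  | @cons d d' u h r ih =>
    intro hd hu hcond
    have hcond' : ∀ x ∈ r.support, x ∉ S ∨ x = u := fun x hx =>
      hcond x (by simp [Walk.support_cons, hx])
    by_cases hd'X : d' ∈ X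
    · obtain ⟨z, hz, r', hzB, hr'c, hlen⟩ := ih hd'X hu hcond'
      exact ⟨z, hz, r', hzB, hr'c, by simp [Walk.length_cons]; omega⟩
    · exact ⟨d', hd'X, r, hedge h.symm hd, hcond', by simp [Walk.length_cons]⟩

/-- shortcut lemma: convert a G-walk avoiding S into a G'-walk avoiding S -/
lemma shortcutX (hedge : ∀ {a x : V}, G.Adj a x → x ∈ X → a ∈ B)
    (hG'1 : ∀ (a b : ↥(Xᶜ)), G.Adj ↑a ↑b → G'.Adj a b)
    (hG'2 : ∀ (a b : ↥(Xᶜ)), ↑a ∈ B → ↑b ∈ B → a ≠ b → G'.Adj a b)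
    (S : Set V) : ∀ (n : ℕ) {c u : V} (p : G.Walk c u), p.length ≤ n →
    ∀ (hc : c ∉ X) (hu : u ∉ X), (∀ x ∈ p.support, x ∉ S ∨ x = u) →
    ∃ q : G'.Walk ⟨c, hc⟩ ⟨u, hu⟩, ∀ x ∈ q.support, (x : V) ∉ S ∨ (x : V) = u := by
  intro n
  induction n with
  | zero =>
    intro c u p hlen hc hu hcond
    cases p with
    | nil =>
      exact ⟨Walk.nil, by
        intro x hx
        simp [Walk.support_nil] at hx
        subst hx
        exact Or.inr rfl⟩
    | cons h p' => simp [Walk.length_cons] at hlen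
  | succ n ih =>
    intro c u p hlen hc hu hcond
    cases p with
    | nil =>
      exact ⟨Walk.nil, by
        intro x hx
        simp [Walk.support_nil] at hx
        subst hx
        exact Or.inr rfl⟩
    | @cons _ d _ h p' =>
      have hcS : c ∉ S ∨ c = u := hcond c (by simp [Walk.support_cons])
      have hcond' : ∀ x ∈ p'.support, x ∉ S ∨ x = u := fun x hx =>
        hcond x (by simp [Walk.support_cons, hx])
      have hlen' : p'.length ≤ n := by simp [Walk.length_cons] at hlen; omega
      by_cases hdX : d ∈ X
      · -- the walk dives into X; find the exit point
        have hcB : c ∈ B := hedge h hdX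
        obtain ⟨z, hz, r', hzB, hr'c, hlenr⟩ := exitX (fun h hx => hedge h hx) S p' hdX hu hcond'
        have hzS : z ∉ S ∨ z = u := hr'c z r'.start_mem_support
        by_cases hzu : z = u
        · -- the exit is u itself
          subst hzu
          by_cases hcu : c = z
          · subst hcu
            exact ⟨Walk.nil, by
              intro x hx
              simp [Walk.support_nil] at hx
              subst hx
              exact Or.inr rfl⟩
          · refine ⟨Walk.cons (hG'2 ⟨c, hc⟩ ⟨z, hu⟩ hcB hzB
              (fun hh => hcu (congrArg Subtype.val hh))) Walk.nil, ?_⟩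
            intro x hx
            simp [Walk.support_cons, Walk.support_nil] at hx
            rcases hx with hx | hx
            · subst hx; simpa using hcS
            · subst hx; exact Or.inr rfl
        · have hzS' : z ∉ S := hzS.resolve_right hzu
          obtain ⟨q', hq'⟩ := ih r' (le_trans hlenr hlen') hz hu hr'c
          by_cases hcz : c = z
          · subst hcz
            exact ⟨q', hq'⟩
          · refine ⟨Walk.cons (hG'2 ⟨c, hc⟩ ⟨z, hz⟩ hcB hzB
              (fun hh => hcz (congrArg Subtype.val hh))) q', ?_⟩
            intro x hx
            rw [Walk.support_cons] at hx
            rcases List.mem_cons.1 hx with hx | hx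
            · subst hx; simpa using hcS
            · exact hq' x hx
      · by_cases hdu : d = u
        · subst hdu
          refine ⟨Walk.cons (hG'1 ⟨c, hc⟩ ⟨d, hdX⟩ h) Walk.nil, ?_⟩
          intro x hx
          simp [Walk.support_cons, Walk.support_nil] at hx
          rcases hx with hx | hx
          · subst hx; simpa using hcS
          · subst hx; exact Or.inr rfl
        · have hdS : d ∉ S := (hcond d (by simp [Walk.support_cons])).resolve_right hdu
          obtain ⟨q', hq'⟩ := ih p' hlen' hdX hu hcond'
          refine ⟨Walk.cons (hG'1 ⟨c, hc⟩ ⟨d, hdX⟩ h) q', ?_⟩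
          intro x hx
          rw [Walk.support_cons] at hx
          rcases List.mem_cons.1 hx with hx | hx
          · subst hx; simpa using hcS
          · exact hq' x hx

end shortcut
end SWHelp

open SimpleGraph SWHelp in
theorem dirA [Fintype V] (G : SimpleGraph V) (k : ℕ)
    (ord : V → ℕ) (hinj : Function.Injective ord)
    (hsep : ∀ S : Set V, DownClosed ord S → ∀ v ∉ S, (sepSetInf G v S).ncard ≤ k) :
    HasTreeDecompOfWidth G k := by
  classical
  cases isEmpty_or_nonempty V with
  | inl hV =>
    refine ⟨PUnit, inferInstance, ⊥, ?_, fun _ => ∅, ?_, ?_, ?_, ?_⟩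
    · rw [isTree_iff]
      have : Nonempty PUnit := ⟨PUnit.unit⟩
      constructor
      · exact ⟨fun x y => by rw [Subsingleton.elim x y]⟩
      · intro v c hc
        cases c with
        | nil => simpa using hc.three_le_length
        | cons h _ => exact h.elim
    · intro i; simp
    · intro v; exact (hV.false v).elim
    · intro u v _; exact (hV.false u).elim
    · intro v; exact (hV.false v).elim
  | inr hV =>
  set n := Fintype.card V with hn
  set e : V ≃ Fin n := Fintype.equivFin V with he
  -- the principal down-sets and separators
  set Sv : V → Set V := fun v => {u | ord u < ord v} with hSv
  set sep : V → Set V := fun v => sepSetInf G v (Sv v) with hsepdef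
  have hdc : ∀ v, DownClosed ord (Sv v) := fun v a b hab hb => lt_of_le_of_lt hab hb
  have hsepS : ∀ v, sep v ⊆ Sv v := fun v u hu => hu.1
  have hsepk : ∀ v, (sep v).ncard ≤ k := fun v =>
    hsep (Sv v) (hdc v) v (by simp [hSv])
  have hordlt : ∀ {a b : V}, a ≠ b → ord a ≤ ord b → ord a < ord b := by
    intro a b hne hle
    exact lt_of_le_of_ne hle (fun h => hne (hinj h))
  -- min vertex
  obtain ⟨m, -, hm⟩ := Finset.exists_min_image (univ : Finset V) ord ⟨Classical.arbitrary V, mem_univ _⟩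
  have hm' : ∀ v, ord m ≤ ord v := fun v => hm v (mem_univ v)
  have hsepm : sep m = ∅ := by
    apply Set.eq_empty_of_subset_empty
    intro u hu
    exact absurd ((hsepS m) hu) (by simp [hSv]; exact hm' u)
  -- parent function
  have hpar : ∀ v : V, ∃ w, (w ∈ sep v ∨ (w = m ∧ sep v = ∅)) ∧ (∀ y ∈ sep v, ord y ≤ ord w) := by
    intro v
    rcases Set.eq_empty_or_nonempty (sep v) with hemp | hne
    · exact ⟨m, Or.inr ⟨rfl, hemp⟩, by simp [hemp]⟩
    · obtain ⟨w, hw, hmax⟩ := Finset.exists_max_image (Set.toFinite (sep v)).toFinset ord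
        (by rwa [Set.Finite.toFinset_nonempty])
      rw [Set.Finite.mem_toFinset] at hw
      exact ⟨w, Or.inl hw, fun y hy => hmax y ((Set.Finite.mem_toFinset _).2 hy)⟩
  choose par hpar1 hpar2 using hpar
  have hparm : par m = m := by
    rcases hpar1 m with h | h
    · rw [hsepm] at h; exact h.elim
    · exact h.1
  have hparlt : ∀ v, v ≠ m → ord (par v) < ord v := by
    intro v hv
    rcases hpar1 v with h | h
    · exact (hsepS v) h
    · rw [h.1]
      exact hordlt (fun hc : m = v => hv hc.symm) (hm' v)
  have hparmem : ∀ v u, u ∈ sep v → par v ∈ sep v := by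
    intro v u hu
    rcases hpar1 v with h | h
    · exact h
    · exact absurd (h.2 ▸ hu) (Set.notMem_empty u)
  -- the hop lemma
  have hop : ∀ v u, u ∈ sep v → u = par v ∨ u ∈ sep (par v) := by
    intro v u hu
    have hw : par v ∈ sep v := hparmem v u hu
    set w := par v with hwdef
    by_cases huw : u = w
    · exact Or.inl huw
    right
    have huw' : ord u < ord w := hordlt huw (hpar2 v u hu)
    obtain ⟨huS, p, hp⟩ := hu
    obtain ⟨hwS, q, hq⟩ := hw
    have hwv : ord w < ord v := hwS
    refine ⟨huw', (q.reverse.append p), ?_⟩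
    intro x hx hxw hxu
    rw [Walk.mem_support_append_iff] at hx
    simp only [hSv, Set.mem_setOf_eq, not_lt]
    rcases hx with hx | hx
    · rw [Walk.support_reverse, List.mem_reverse] at hx
      by_cases hxv : x = v
      · subst hxv; omega
      · have := hq x hx hxv hxw
        simp only [hSv, Set.mem_setOf_eq, not_lt] at this
        omega
    · by_cases hxv : x = v
      · subst hxv; omega
      · have := hp x hx hxv hxu
        simp only [hSv, Set.mem_setOf_eq, not_lt] at this
        omega
  -- bags
  set bag : Fin n → Set V := fun i => insert (e.symm i) (sep (e.symm i)) with hbag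
  have hbagself : ∀ v : V, v ∈ bag (e v) := by
    intro v; simp [hbag]
  have hbagmem : ∀ v u : V, u ∈ sep v → u ∈ bag (e v) := by
    intro v u hu; simp [hbag]; right; simpa using hu
  -- adjacency to separator
  have hadjsep : ∀ {a b : V}, G.Adj a b → ord b < ord a → b ∈ sep a := by
    intro a b hab hlt
    refine ⟨hlt, Walk.cons hab Walk.nil, ?_⟩
    intro x hx hxa hxb
    simp [Walk.support_cons, Walk.support_nil] at hx
    rcases hx with h | h
    · exact absurd h hxa
    · exact absurd h hxb
  -- the tree
  set T : SimpleGraph (Fin n) := SimpleGraph.fromRel (fun i j => par (e.symm i) = e.symm j) with hT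
  have hTadj : ∀ i j, T.Adj i j ↔ i ≠ j ∧ (par (e.symm i) = e.symm j ∨ par (e.symm j) = e.symm i) := by
    intro i j; rw [hT]; exact SimpleGraph.fromRel_adj _ i j
  have hkeyAdj : ∀ v : V, v ≠ m → T.Adj (e v) (e (par v)) := by
    intro v hv
    rw [hTadj]
    constructor
    · intro hc
      have : v = par v := by
        have := congrArg e.symm hc; simpa using this
      exact absurd (hparlt v hv) (by rw [← this]; exact lt_irrefl _)
    · left; simp
  have hdown : ∀ i j, T.Adj i j → ord (e.symm j) < ord (e.symm i) → par (e.symm i) = e.symm j := by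
    intro i j hij hlt
    rw [hTadj] at hij
    rcases hij.2 with h | h
    · exact h
    · exfalso
      by_cases hjm : e.symm j = m
      · rw [hjm, hparm] at h
        rw [hjm, h] at hlt
        exact lt_irrefl _ hlt
      · have := hparlt (e.symm j) hjm
        rw [h] at this
        omega
  -- T is connected
  have hreachm : ∀ N (v : V), ord v ≤ N → T.Reachable (e v) (e m) := by
    intro N
    induction N with
    | zero =>
      intro v hv
      by_cases hvm : v = m
      · subst hvm; exact Reachable.refl _
      · exact absurd (hparlt v hvm) (by omega)
    | succ N ih =>
      intro v hv
      by_cases hvm : v = m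
      · subst hvm; exact Reachable.refl _
      · have hlt := hparlt v hvm
        exact ((hkeyAdj v hvm).reachable).trans (ih (par v) (by omega))
  have hTconn : T.Connected := by
    have : Nonempty (Fin n) := by
      rw [hn]; exact ⟨⟨0, Fintype.card_pos⟩⟩
    refine ⟨fun i j => ?_⟩
    have h1 := hreachm (ord (e.symm i)) (e.symm i) le_rfl
    have h2 := hreachm (ord (e.symm j)) (e.symm j) le_rfl
    simp only [Equiv.apply_symm_apply] at h1 h2
    exact h1.trans h2.symm
  -- T is acyclic
  have hnocyc : ∀ (i : Fin n) (w : T.Walk i i), w.IsCycle →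
      (∀ x ∈ w.support, ord (e.symm x) ≤ ord (e.symm i)) → False := by
    intro i w hcyc hbound
    cases w with
    | nil => simpa using hcyc.three_le_length
    | @cons _ b _ hadj q =>
      have hib : i ≠ b := hadj.ne
      obtain ⟨z, hadjz, q2, hq2⟩ := Walk.exists_eq_cons_of_ne hib q.reverse
      have hbmem : b ∈ (Walk.cons hadj q).support := by
        simp [Walk.support_cons, Walk.start_mem_support]
      have hzmem : z ∈ (Walk.cons hadj q).support := by
        have : z ∈ q.reverse.support := by rw [hq2]; simp [Walk.support_cons, Walk.start_mem_support]
        rw [Walk.support_reverse, List.mem_reverse] at this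
        simp [Walk.support_cons, this]
      have hblt : ord (e.symm b) < ord (e.symm i) := by
        refine hordlt (fun hc => hib.symm (e.symm.injective hc)) (hbound b hbmem)
      have hzlt : ord (e.symm z) < ord (e.symm i) := by
        refine hordlt (fun hc => hadjz.ne' (e.symm.injective hc)) (hbound z hzmem)
      have h1 : par (e.symm i) = e.symm b := hdown i b hadj hblt
      have h2 : par (e.symm i) = e.symm z := hdown i z hadjz hzlt
      have hbz : b = z := e.symm.injective (h1 ▸ h2)
      -- now derive contradiction: q2 is a closed path hence nil, so cycle length 2
      have hqpath : q.IsPath := ((Walk.cons_isCycle_iff q hadj).1 hcyc).1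
      have hqr : q.reverse.IsPath := hqpath.reverse
      rw [hq2] at hqr
      rw [Walk.cons_isPath_iff] at hqr
      have hq2path : q2.IsPath := hqr.1
      subst hbz
      rw [Walk.isPath_iff_eq_nil] at hq2path
      have hlen : q.length = 1 := by
        have := congrArg Walk.length hq2
        rw [Walk.length_reverse, hq2path] at this
        simpa using this
      have := hcyc.three_le_length
      simp [Walk.length_cons, hlen] at this
  have hTacyc : T.IsAcyclic := by
    intro i0 c hc
    obtain ⟨imax, himax_mem, himax⟩ := Finset.exists_max_image c.support.toFinset
      (fun i => ord (e.symm i)) ⟨i0, by simp [Walk.start_mem_support]⟩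
    rw [List.mem_toFinset] at himax_mem
    have hsub : ∀ x ∈ (c.rotate imax himax_mem).support, x ∈ c.support := by
      intro x hx
      rcases (List.mem_cons.1 (by rwa [← Walk.support_eq_cons] : x ∈ imax :: (c.rotate imax himax_mem).support.tail)) with h | h
      · subst h; exact himax_mem
      · have := (Walk.support_rotate c imax himax_mem).mem_iff.1 h
        exact List.mem_of_mem_tail this
    exact hnocyc imax (c.rotate imax himax_mem) (hc.rotate himax_mem)
      (fun x hx => himax x (List.mem_toFinset.2 (hsub x hx)))
  -- subtree connectivity
  have hsubtree : ∀ u : V, (T.induce {i | u ∈ bag i}).Connected := by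
    intro u
    apply induce_connected_of_walks ⟨e u, hbagself u⟩
    have key : ∀ N (i : Fin n), ord (e.symm i) ≤ N → u ∈ bag i →
        ∃ p : T.Walk i (e u), ∀ x ∈ p.support, x ∈ {j | u ∈ bag j} := by
      intro N
      induction N with
      | zero =>
        intro i hv hu
        by_cases hvu : e.symm i = u
        · have hieu : i = e u := by rw [← hvu]; simp
          subst hieu
          exact ⟨Walk.nil, by simpa [Walk.support_nil] using hu⟩
        · exfalso
          have hu' : u ∈ sep (e.symm i) := by
            simp only [hbag, Set.mem_insert_iff] at hu
            rcases hu with h | h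
            · exact absurd h.symm hvu
            · exact h
          have := (hsepS (e.symm i)) hu'
          simp only [hSv, Set.mem_setOf_eq] at this
          omega
      | succ N ih =>
        intro i hv hu
        by_cases hvu : e.symm i = u
        · have hieu : i = e u := by rw [← hvu]; simp
          subst hieu
          exact ⟨Walk.nil, by simpa [Walk.support_nil] using hu⟩
        · set v := e.symm i with hvdef
          have hu' : u ∈ sep v := by
            simp only [hbag, Set.mem_insert_iff] at hu
            rcases hu with h | h
            · exact absurd h.symm hvu
            · exact h
          have hw : par v ∈ sep v := hparmem v u hu'
          have hwlt : ord (par v) < ord v := (hsepS v) hw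
          have hubagw : u ∈ bag (e (par v)) := by
            rcases hop v u hu' with h | h
            · rw [h]; exact hbagself (par v)
            · exact hbagmem (par v) u h
          have hvm : v ≠ m := by
            intro hc
            rw [hc, hsepm] at hu'
            exact hu'
          have hadj : T.Adj i (e (par v)) := by
            have := hkeyAdj v hvm
            rwa [hvdef, Equiv.apply_symm_apply] at this
          obtain ⟨p', hp'⟩ := ih (e (par v)) (by simp; omega) hubagw
          refine ⟨Walk.cons hadj p', ?_⟩
          intro x hx
          rw [Walk.support_cons] at hx
          rcases List.mem_cons.1 hx with h | h
          · subst h; exact hu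
          · exact hp' x h
    intro a ha b hb
    obtain ⟨p, hp⟩ := key (ord (e.symm a)) a le_rfl ha
    obtain ⟨q, hq⟩ := key (ord (e.symm b)) b le_rfl hb
    refine ⟨p.append q.reverse, ?_⟩
    intro x hx
    rw [Walk.mem_support_append_iff] at hx
    rcases hx with hx | hx
    · exact hp x hx
    · rw [Walk.support_reverse, List.mem_reverse] at hx
      exact hq x hx
  -- assemble
  refine ⟨Fin n, inferInstance, T, (isTree_iff T).2 ⟨hTconn, hTacyc⟩, bag, ?_, ?_, ?_, hsubtree⟩
  · intro i
    have h1 := Set.ncard_insert_le (e.symm i) (sep (e.symm i))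
    have h2 := hsepk (e.symm i)
    simp only [hbag]
    omega
  · exact fun v => ⟨e v, hbagself v⟩
  · intro u v huv
    rcases lt_trichotomy (ord u) (ord v) with h | h | h
    · exact ⟨e v, hbagmem v u (hadjsep huv.symm h), hbagself v⟩
    · exact absurd (hinj h) huv.ne
    · exact ⟨e u, hbagself u, hbagmem u v (hadjsep huv h)⟩

open SimpleGraph SWHelp in
theorem dirB : ∀ (n : ℕ) (ι : Type) [Fintype ι] (T : SimpleGraph ι), T.IsTree →
    Fintype.card ι = n →
    ∀ {V : Type*} [Fintype V] (G : SimpleGraph V) (bag : ι → Set V) (k : ℕ),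
    (∀ i, (bag i).ncard ≤ k + 1) →
    (∀ v : V, ∃ i, v ∈ bag i) →
    (∀ u v : V, G.Adj u v → ∃ i, u ∈ bag i ∧ v ∈ bag i) →
    (∀ v : V, (T.induce {i | v ∈ bag i}).Connected) →
    ∃ ord : V → ℕ, Function.Injective ord ∧
      ∀ S : Set V, DownClosed ord S → ∀ v ∉ S, (sepSetInf G v S).ncard ≤ k := by
  intro n
  induction n using Nat.strong_induction_on with
  | _ n ih =>
  intro ι instι T hT hcard V instV G bag k hwidth hcover hedges hsubtree
  classical
  have hne : Nonempty ι := ((isTree_iff T).1 hT).1.nonempty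
  have hpos : 0 < n := hcard ▸ Fintype.card_pos
  by_cases hn1 : n = 1
  · -- single bag case
    subst hn1
    obtain ⟨i0, hi0⟩ := Fintype.card_eq_one_iff.1 hcard
    have huniv : ∀ v : V, v ∈ bag i0 := by
      intro v
      obtain ⟨i, hi⟩ := hcover v
      rwa [hi0 i] at hi
    have hcV : Fintype.card V ≤ k + 1 := by
      have h1 : (Set.univ : Set V).ncard ≤ (bag i0).ncard :=
        Set.ncard_le_ncard (fun v _ => huniv v) (Set.toFinite _)
      rw [Set.ncard_univ, Nat.card_eq_fintype_card] at h1
      have := hwidth i0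
      omega
    refine ⟨fun v => ((Fintype.equivFin V) v : ℕ),
      fun a b h => (Fintype.equivFin V).injective (Fin.val_injective h), ?_⟩
    intro S hS v hv
    have hsub : sepSetInf G v S ⊆ Set.univ \ {v} := by
      intro u hu
      exact ⟨Set.mem_univ u, fun h => hv ((Set.mem_singleton_iff.1 h) ▸ hu.1)⟩
    calc (sepSetInf G v S).ncard ≤ (Set.univ \ {v} : Set V).ncard :=
          Set.ncard_le_ncard hsub (Set.toFinite _)
      _ = (Set.univ : Set V).ncard - 1 := Set.ncard_diff_singleton_of_mem (Set.mem_univ v)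
      _ ≤ k := by rw [Set.ncard_univ, Nat.card_eq_fintype_card]; omega
  · -- main case: at least two nodes, remove a leaf
    have h2 : 2 ≤ Fintype.card ι := by omega
    obtain ⟨ℓ, p0, hadjℓ, hnb⟩ := exists_leaf T hT h2
    have hp0ℓ : p0 ≠ ℓ := hadjℓ.ne'
    set X : Set V := {x | x ∈ bag ℓ ∧ x ∉ bag p0} with hXdef
    have hXB : X ⊆ bag ℓ := fun x hx => hx.1
    have hXonly : ∀ x ∈ X, ∀ i, x ∈ bag i → i = ℓ := by
      intro x hx i hi
      by_contra hneℓ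
      obtain ⟨w, hw⟩ := walks_of_induce_connected (hsubtree x)
        (show i ∈ {j | x ∈ bag j} from hi) (show ℓ ∈ {j | x ∈ bag j} from hx.1)
      exact hx.2 (hw p0 (passes_nbr hnb hneℓ w))
    have hedgeX : ∀ {a x : V}, G.Adj a x → x ∈ X → a ∈ bag ℓ := by
      intro a x h hx
      obtain ⟨i, hai, hxi⟩ := hedges a x h
      rwa [hXonly x hx i hxi] at hai
    have hnotX : ∀ {x : V}, x ∉ X → x ∈ bag ℓ → x ∈ bag p0 := by
      intro x hx hxl
      by_contra h
      exact hx ⟨hxl, h⟩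
    -- the reduced graph
    set G' : SimpleGraph ↥(Xᶜ) :=
      { Adj := fun a b => a ≠ b ∧ (G.Adj ↑a ↑b ∨ ((a : V) ∈ bag ℓ ∧ (b : V) ∈ bag ℓ))
        symm := ⟨by
          rintro a b ⟨h1, h2⟩
          exact ⟨h1.symm, by rcases h2 with h | h; exact Or.inl h.symm; exact Or.inr ⟨h.2, h.1⟩⟩⟩
        loopless := ⟨fun a h => h.1 rfl⟩ } with hG'def
    have hG'1 : ∀ (a b : ↥(Xᶜ)), G.Adj ↑a ↑b → G'.Adj a b :=
      fun a b h => ⟨fun he => h.ne (congrArg Subtype.val he), Or.inl h⟩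
    have hG'2 : ∀ (a b : ↥(Xᶜ)), (a : V) ∈ bag ℓ → (b : V) ∈ bag ℓ → a ≠ b → G'.Adj a b :=
      fun a b ha hb hne => ⟨hne, Or.inr ⟨ha, hb⟩⟩
    -- the reduced tree
    set sι : Set ι := {ℓ}ᶜ with hsιdef
    have hp0sι : p0 ∈ sι := by simp [hsιdef, hp0ℓ]
    have hT' : (T.induce sι).IsTree := isTree_delete_leaf hT hadjℓ hnb
    have hn' : Fintype.card ↥sι < n := by
      rw [← hcard]
      apply Fintype.card_lt_of_injective_of_notMem (Subtype.val : ↥sι → ι) Subtype.val_injective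
        (b := ℓ)
      rintro ⟨⟨x, hx⟩, hxx⟩
      simp only [hsιdef, Set.mem_compl_iff, Set.mem_singleton_iff] at hx
      exact hx hxx
    -- the reduced bags
    set bag' : ↥sι → Set ↥(Xᶜ) := fun j => {w | (w : V) ∈ bag ↑j} with hbag'def
    have hwidth' : ∀ j, (bag' j).ncard ≤ k + 1 := by
      intro j
      have hsub : Subtype.val '' (bag' j) ⊆ bag ↑j := by
        rintro _ ⟨w, hw, rfl⟩; exact hw
      calc (bag' j).ncard = (Subtype.val '' (bag' j)).ncard :=
            (Set.ncard_image_of_injective _ Subtype.val_injective).symm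
        _ ≤ (bag (↑j : ι)).ncard := Set.ncard_le_ncard hsub (Set.toFinite _)
        _ ≤ k + 1 := hwidth _
    have hcover' : ∀ w : ↥(Xᶜ), ∃ j, w ∈ bag' j := by
      intro w
      obtain ⟨i, hi⟩ := hcover ↑w
      by_cases hiℓ : i = ℓ
      · subst hiℓ
        exact ⟨⟨p0, hp0sι⟩, hnotX w.2 hi⟩
      · exact ⟨⟨i, by simp [hsιdef, hiℓ]⟩, hi⟩
    have hedges' : ∀ a b : ↥(Xᶜ), G'.Adj a b → ∃ j, a ∈ bag' j ∧ b ∈ bag' j := by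
      intro a b hab
      rcases hab.2 with h | h
      · obtain ⟨i, hai, hbi⟩ := hedges ↑a ↑b h
        by_cases hiℓ : i = ℓ
        · subst hiℓ
          exact ⟨⟨p0, hp0sι⟩, hnotX a.2 hai, hnotX b.2 hbi⟩
        · exact ⟨⟨i, by simp [hsιdef, hiℓ]⟩, hai, hbi⟩
      · exact ⟨⟨p0, hp0sι⟩, hnotX a.2 h.1, hnotX b.2 h.2⟩
    have hsubtree' : ∀ w : ↥(Xᶜ), ((T.induce sι).induce {j | w ∈ bag' j}).Connected := by
      intro w
      apply induce_connected_of_walks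
      · obtain ⟨j, hj⟩ := hcover' w
        exact ⟨j, hj⟩
      · intro a ha b hb
        obtain ⟨w0, hw0⟩ := walks_of_induce_connected (hsubtree ↑w)
          (show ((a : ι) : ι) ∈ {i | (w : V) ∈ bag i} from ha)
          (show ((b : ι) : ι) ∈ {i | (w : V) ∈ bag i} from hb)
        set q : T.Walk ↑a ↑b := (w0.toPath : T.Walk ↑a ↑b) with hqdef
        have hqsupp : ∀ x ∈ q.support, x ∈ {i | (w : V) ∈ bag i} :=
          fun x hx => hw0 x (Walk.support_toPath_subset w0 hx)
        have hℓq : ℓ ∉ q.support := by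
          by_cases hwℓ : (w : V) ∈ bag ℓ
          · exact leaf_not_mem_path hnb q w0.toPath.2 a.2 b.2
          · intro hmem
            exact hwℓ (hqsupp ℓ hmem)
        have hqsι : ∀ x ∈ q.support, x ∈ sι := by
          intro x hx
          simp only [hsιdef, Set.mem_compl_iff, Set.mem_singleton_iff]
          intro hxl
          exact hℓq (hxl ▸ hx)
        obtain ⟨q1, hq1⟩ := pack_walk q hqsι a.2 b.2
        refine ⟨q1, fun x hx => ?_⟩
        have : (x : ι) ∈ q.support := by
          rw [← hq1]
          exact List.mem_map_of_mem (f := Subtype.val) hx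
        exact hqsupp _ this
    -- apply induction hypothesis
    obtain ⟨ord', hinj', hsep'⟩ := ih (Fintype.card ↥sι) hn' ↥sι (T.induce sι) hT' rfl
      G' bag' k hwidth' hcover' hedges' hsubtree'
    -- build the ordering on V : X goes on top
    set M : ℕ := (univ.sup fun w : ↥(Xᶜ) => ord' w) + 1 with hMdef
    set gV : V → ℕ := fun v => ((Fintype.equivFin V) v : ℕ) with hgVdef
    set ord : V → ℕ := fun v => if h : v ∈ X then M + gV v else ord' ⟨v, h⟩ with horddef
    have hordX : ∀ v (h : v ∈ X), ord v = M + gV v := by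
      intro v h; simp only [horddef, dif_pos h]
    have hordnX : ∀ v (h : v ∉ X), ord v = ord' ⟨v, h⟩ := by
      intro v h; simp only [horddef, dif_neg h]
    have hlow : ∀ v (h : v ∉ X), ord v < M := by
      intro v h
      rw [hordnX v h, hMdef]
      have h2 : ord' ⟨v, h⟩ ≤ univ.sup (fun w : ↥(Xᶜ) => ord' w) :=
        Finset.le_sup (mem_univ (⟨v, h⟩ : ↥(Xᶜ)))
      omega
    have hinj : Function.Injective ord := by
      intro a b hab
      by_cases haX : a ∈ X <;> by_cases hbX : b ∈ X
      · rw [hordX a haX, hordX b hbX] at hab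
        have : gV a = gV b := by omega
        exact (Fintype.equivFin V).injective (Fin.val_injective this)
      · exfalso; rw [hordX a haX] at hab; have := hlow b hbX; omega
      · exfalso; rw [hordX b hbX] at hab; have := hlow a haX; omega
      · rw [hordnX a haX, hordnX b hbX] at hab
        exact congrArg Subtype.val (hinj' hab)
    refine ⟨ord, hinj, ?_⟩
    intro S hS v hv
    by_cases hSXe : ∃ x, x ∈ S ∧ x ∈ X
    · -- some X vertex is in S, so S contains everything outside X
      obtain ⟨x0, hx0S, hx0X⟩ := hSXe
      have hXcS : ∀ y, y ∉ X → y ∈ S := by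
        intro y hy
        refine hS ?_ hx0S
        rw [hordX x0 hx0X]
        have := hlow y hy
        omega
      have hvX : v ∈ X := by
        by_contra h
        exact hv (hXcS v h)
      have hsub : sepSetInf G v S ⊆ bag ℓ \ {v} := by
        rintro u ⟨huS, p, hp⟩
        have hvu : v ≠ u := fun h => hv (h ▸ huS)
        obtain ⟨y, hy, r, hr⟩ := Walk.exists_eq_cons_of_ne (Ne.symm hvu) p.reverse
        have hymem : y ∈ p.support := by
          have : y ∈ p.reverse.support := by
            rw [hr]; simp [Walk.support_cons, Walk.start_mem_support]
          rwa [Walk.support_reverse, List.mem_reverse] at this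
        have hyX : y ∈ X := by
          by_cases hyv : y = v
          · exact hyv ▸ hvX
          · by_contra hyX
            exact (hp y hymem hyv hy.ne') (hXcS y hyX)
        refine ⟨hedgeX hy hyX, ?_⟩
        simp only [Set.mem_singleton_iff]
        exact fun h => hvu h.symm
      calc (sepSetInf G v S).ncard ≤ (bag ℓ \ {v}).ncard :=
            Set.ncard_le_ncard hsub (Set.toFinite _)
        _ = (bag ℓ).ncard - 1 := Set.ncard_diff_singleton_of_mem (hXB hvX)
        _ ≤ k := by have := hwidth ℓ; omega
    · -- S avoids X
      push_neg at hSXe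
      have hSX : ∀ x ∈ X, x ∉ S := fun x hx hxS => hSXe x hxS hx
      set S' : Set ↥(Xᶜ) := {w | (w : V) ∈ S} with hS'def
      have hS'dc : DownClosed ord' S' := by
        intro a b hab hb
        refine hS ?_ hb
        rw [hordnX _ a.2, hordnX _ b.2]
        simpa using hab
      have himg : ∀ w0 : ↥(Xᶜ), (w0 : V) ∉ S →
          sepSetInf G v S ⊆ Subtype.val '' sepSetInf G' w0 S' →
          (sepSetInf G v S).ncard ≤ k := by
        intro w0 hw0 hsubm
        calc (sepSetInf G v S).ncard ≤ (Subtype.val '' sepSetInf G' w0 S').ncard :=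
              Set.ncard_le_ncard hsubm (Set.toFinite _)
          _ = (sepSetInf G' w0 S').ncard := Set.ncard_image_of_injective _ Subtype.val_injective
          _ ≤ k := hsep' S' hS'dc w0 hw0
      have hconv : ∀ (w0 : ↥(Xᶜ)) (u : V) (huS : u ∈ S) (huX : u ∉ X)
          (q : G'.Walk w0 ⟨u, huX⟩), (∀ x ∈ q.support, (x : V) ∉ S ∨ (x : V) = u) →
          (⟨u, huX⟩ : ↥(Xᶜ)) ∈ sepSetInf G' w0 S' := by
        intro w0 u huS huX q hq
        refine ⟨huS, q, ?_⟩
        intro x hx hxv hxu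
        rcases hq x hx with h | h
        · exact h
        · exact absurd (Subtype.ext h) hxu
      have hcondify : ∀ (u : V) (hu : u ∈ sepSetInf G v S),
          ∃ p : G.Walk v u, ∀ x ∈ p.support, x ∉ S ∨ x = u := by
        rintro u ⟨huS, p, hp⟩
        refine ⟨p, fun x hx => ?_⟩
        by_cases hxv : x = v
        · exact Or.inl (hxv ▸ hv)
        · by_cases hxu : x = u
          · exact Or.inr hxu
          · exact Or.inl (hp x hx hxv hxu)
      by_cases hvX : v ∈ X
      · -- v is inside X
        by_cases hsub : sepSetInf G v S ⊆ bag ℓ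
        · have hsub2 : sepSetInf G v S ⊆ bag ℓ \ {v} := by
            intro u hu
            refine ⟨hsub hu, ?_⟩
            simp only [Set.mem_singleton_iff]
            exact fun h => hv (h ▸ hu.1)
          calc (sepSetInf G v S).ncard ≤ (bag ℓ \ {v}).ncard :=
                Set.ncard_le_ncard hsub2 (Set.toFinite _)
            _ = (bag ℓ).ncard - 1 := Set.ncard_diff_singleton_of_mem (hXB hvX)
            _ ≤ k := by have := hwidth ℓ; omega
        · obtain ⟨u0, hu0sep, hu0B⟩ := Set.not_subset.1 hsub
          have hu0X : u0 ∉ X := fun h => hSX u0 h hu0sep.1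
          obtain ⟨p0w, hc0⟩ := hcondify u0 hu0sep
          obtain ⟨z0, hz0X, r0, hz0B, hr0c, -⟩ := exitX (fun h hx => hedgeX h hx) S p0w hvX hu0X hc0
          have hz0u : z0 ≠ u0 := fun h => hu0B (h ▸ hz0B)
          have hz0S : z0 ∉ S := (hr0c z0 r0.start_mem_support).resolve_right hz0u
          apply himg ⟨z0, hz0X⟩ hz0S
          intro u hu
          have huX : u ∉ X := fun h => hSX u h hu.1
          refine ⟨⟨u, huX⟩, ?_, rfl⟩
          by_cases huB : u ∈ bag ℓ
          · have hne : (⟨z0, hz0X⟩ : ↥(Xᶜ)) ≠ ⟨u, huX⟩ := by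
              intro h
              have hzu : z0 = u := congrArg Subtype.val h
              exact hz0S (hzu ▸ hu.1)
            refine hconv _ u hu.1 huX
              (Walk.cons (hG'2 ⟨z0, hz0X⟩ ⟨u, huX⟩ hz0B huB hne) Walk.nil) ?_
            intro x hx
            simp only [Walk.support_cons, Walk.support_nil, List.mem_cons,
              List.not_mem_nil, or_false, List.mem_singleton] at hx
            rcases hx with hx | hx
            · subst hx; exact Or.inl hz0S
            · subst hx; exact Or.inr rfl
          · obtain ⟨pw, hcu⟩ := hcondify u hu
            obtain ⟨z, hzX, r, hzB, hrc, -⟩ := exitX (fun h hx => hedgeX h hx) S pw hvX huX hcu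
            have hzu : z ≠ u := fun h => huB (h ▸ hzB)
            have hzS : z ∉ S := (hrc z r.start_mem_support).resolve_right hzu
            obtain ⟨q', hq'⟩ := shortcutX (fun h hx => hedgeX h hx) hG'1 hG'2 S
              r.length r le_rfl hzX huX hrc
            by_cases hzz0 : z0 = z
            · subst hzz0
              exact hconv _ u hu.1 huX q' hq'
            · refine hconv _ u hu.1 huX
                (Walk.cons (hG'2 ⟨z0, hz0X⟩ ⟨z, hzX⟩ hz0B hzB
                  (fun h => hzz0 (congrArg Subtype.val h))) q') ?_
              intro x hx
              rw [Walk.support_cons] at hx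
              rcases List.mem_cons.1 hx with hx | hx
              · subst hx; exact Or.inl hz0S
              · exact hq' x hx
      · -- v is outside X
        apply himg ⟨v, hvX⟩ hv
        intro u hu
        have huX : u ∉ X := fun h => hSX u h hu.1
        obtain ⟨pw, hcu⟩ := hcondify u hu
        obtain ⟨q, hq⟩ := shortcutX (fun h hx => hedgeX h hx) hG'1 hG'2 S
          pw.length pw le_rfl hvX huX hcu
        exact ⟨⟨u, huX⟩, hconv _ u hu.1 huX q hq, rfl⟩


/-- the radius-`∞` separation-width equals the tree-width. -/
theorem stmt12 [Fintype V] (G : SimpleGraph V) :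
    sepWidthInf G = treewidth G := by
  have hsets : {k | ∃ ord : V → ℕ, Function.Injective ord ∧
      ∀ S : Set V, DownClosed ord S → ∀ v ∉ S, (sepSetInf G v S).ncard ≤ k}
      = {k | HasTreeDecompOfWidth G k} := by
    ext k
    constructor
    · rintro ⟨ord, hinj, hsep⟩
      exact dirA G k ord hinj hsep
    · rintro ⟨ι, instι, T, hT, bag, h1, h2, h3, h4⟩
      exact dirB (Fintype.card ι) ι T hT rfl G bag k h1 h2 h3 h4
  rw [sepWidthInf, treewidth, hsets]
end

section
/- Let G be a K_{t,t}-free graph, let u, v, w be vertices with uv ∈ E(G) and u, v in parts P, Q of a partition 𝒫 of V(G), and let H be a 𝒫-flip of G in which P and Q are flipped. If u is not t-complete to Q, v is not t-complete to P, and |P|, |Q| ≥ t², then dist_H(u, v) ≤ 3. -/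
open Finset

variable {V : Type*}

/-- Let `G` be `K_{t,t}`-free, `uv ∈ E(G)` with `u ∈ P`, `v ∈ Q` for parts
`P, Q` of `Prt`, and let `H` be a `Prt`-flip of `G` in which the pair `(P, Q)` is flipped.
If `u` is not `t`-complete to `Q`, `v` is not `t`-complete to `P`, and `|P|, |Q| ≥ t²`,
then `dist_H(u, v) ≤ 3`. -/
theorem stmt13 [Fintype V] [DecidableEq V] (t : ℕ) (G H : SimpleGraph V)
    (hG : KttFree t G) (Prt : Finpartition (Finset.univ : Finset V))
    (f : Finset V → Finset V → Bool) (hsymm : ∀ A B, f A B = f B A)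
    (hflip : ∀ u v : V, u ≠ v → ∀ A ∈ Prt.parts, ∀ B ∈ Prt.parts, u ∈ A → v ∈ B →
        (H.Adj u v ↔ Xor' (G.Adj u v) (f A B = true)))
    (u v : V) (P Q : Finset V) (hP : P ∈ Prt.parts) (hQ : Q ∈ Prt.parts)
    (huP : u ∈ P) (hvQ : v ∈ Q) (huv : G.Adj u v)
    (hfPQ : f P Q = true)
    (hu : ¬ tComplete G t u Q) (hv : ¬ tComplete G t v P)
    (hPbig : t ^ 2 ≤ P.card) (hQbig : t ^ 2 ≤ Q.card) :
    ∃ p : H.Walk u v, p.length ≤ 3 := by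
  classical
  set Q' : Finset V := Q.filter (fun x => ¬ G.Adj u x) with hQ'def
  set P' : Finset V := P.filter (fun y => ¬ G.Adj v y) with hP'def
  have hQ'card : t ≤ Q'.card := by
    unfold tComplete at hu
    push_neg at hu
    have hset : ((Q : Set V) \ {x | G.Adj u x}) = ↑Q' := by
      ext x; simp [hQ'def, Set.mem_diff]
    rwa [hset, Set.ncard_coe_finset] at hu
  have hP'card : t ≤ P'.card := by
    unfold tComplete at hv
    push_neg at hv
    have hset : ((P : Set V) \ {x | G.Adj v x}) = ↑P' := by
      ext x; simp [hP'def, Set.mem_diff]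
    rwa [hset, Set.ncard_coe_finset] at hv
  -- edges from u to Q' and from v to P' in H
  have hedgeQ : ∀ x ∈ Q', x ≠ u → H.Adj u x := by
    intro x hx hxu
    obtain ⟨hxQ, hnadj⟩ := Finset.mem_filter.mp hx
    rw [hflip u x (Ne.symm hxu) P hP Q hQ huP hxQ]
    simp [Xor', hnadj, hfPQ]
  have hedgeP : ∀ y ∈ P', y ≠ v → H.Adj v y := by
    intro y hy hyv
    obtain ⟨hyP, hnadj⟩ := Finset.mem_filter.mp hy
    rw [hflip v y (Ne.symm hyv) Q hQ P hP hvQ hyP]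
    simp [Xor', hnadj, hsymm Q P, hfPQ]
  have hedgeQP : ∀ x ∈ Q', ∀ y ∈ P', x ≠ y → ¬ G.Adj x y → H.Adj x y := by
    intro x hx y hy hxy hnadj
    obtain ⟨hxQ, _⟩ := Finset.mem_filter.mp hx
    obtain ⟨hyP, _⟩ := Finset.mem_filter.mp hy
    rw [hflip x y hxy Q hQ P hP hxQ hyP]
    simp [Xor', hnadj, hsymm Q P, hfPQ]
  by_cases hint : ∃ z, z ∈ Q' ∧ z ∈ P'
  · obtain ⟨z, hzQ, hzP⟩ := hint
    have hzu : z ≠ u := by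
      intro h; subst h
      exact (Finset.mem_filter.mp hzP).2 huv.symm
    have hzv : z ≠ v := by
      intro h; subst h
      exact (Finset.mem_filter.mp hzQ).2 huv
    exact ⟨.cons (hedgeQ z hzQ hzu) (.cons (hedgeP z hzP hzv).symm .nil), by simp⟩
  · have hdisj : Disjoint Q' P' := Finset.disjoint_left.mpr
      (fun {z} hz1 hz2 => hint ⟨z, hz1, hz2⟩)
    obtain ⟨A, hA, hAcard⟩ := Finset.exists_subset_card_eq hQ'card
    obtain ⟨B, hB, hBcard⟩ := Finset.exists_subset_card_eq hP'card
    have hnot : ¬ ∀ a ∈ A, ∀ b ∈ B, G.Adj a b := fun hall =>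
      hG ⟨A, B, (hdisj.mono hA hB), hAcard, hBcard, hall⟩
    push_neg at hnot
    obtain ⟨x, hxA, y, hyB, hnadj⟩ := hnot
    have hxQ' : x ∈ Q' := hA hxA
    have hyP' : y ∈ P' := hB hyB
    have hxy : x ≠ y := fun h => (Finset.disjoint_left.mp hdisj hxQ') (h ▸ hyP')
    have hHxy : H.Adj x y := hedgeQP x hxQ' y hyP' hxy hnadj
    by_cases hxu : x = u
    · by_cases hyv : y = v
      · subst hxu; subst hyv; exact absurd huv hnadj
      · subst hxu
        exact ⟨.cons hHxy (.cons (hedgeP y hyP' hyv).symm .nil), by simp⟩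
    · by_cases hyv : y = v
      · subst hyv
        exact ⟨.cons (hedgeQ x hxQ' hxu) (.cons hHxy .nil), by simp⟩
      · exact ⟨.cons (hedgeQ x hxQ' hxu)
          (.cons hHxy (.cons (hedgeP y hyP' hyv).symm .nil)), by simp⟩
end

section
/- Let G be a finite graph, r ≥ 1, and suppose sw_{2r}(G) ≤ k, witnessed by an ordering v_1 < … < v_n with sets S_i = {v_1,…,v_i}. In the Cops and Robber game of radius r, the strategy where in round i the cops occupy sep_{2r}(w_{i-1}/S_{i-1}) ∪ {v_i} (with w_{i-1} the robber's current position) maintains the invariant that the robber's path in round i avoids S_{i-1}; hence the cops win within n rounds using at most k+1 cops, and copwidth_r(G) ≤ sw_{2r}(G) + 1. -/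
open Finset

variable {V : Type*}

/-- The radius-`r` copwidth of `G`: the least `k` such that the cops have a winning
strategy `σ` (mapping the robber's position history to at most `k` cop positions) in the
Cops and Robber game where the robber moves at speed `r`: for every play — `C 0 = ∅`,
`C (i+1)` given by the strategy, and the robber moving along a walk of length at most `r`
avoiding the stationary cops `C (i+1) ∩ C i` — the robber is eventually caught. -/
noncomputable def copwidth [Fintype V] [DecidableEq V] (G : SimpleGraph V) (r : ℕ) : ℕ :=
  sInf {k | ∃ σ : List V → Finset V, (∀ h, (σ h).card ≤ k) ∧
    ∀ (w : ℕ → V) (C : ℕ → Finset V),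
      C 0 = ∅ →
      (∀ i, C (i + 1) = σ ((List.range (i + 1)).map w)) →
      (∀ i, ∃ p : G.Walk (w i) (w (i + 1)), p.length ≤ r ∧
          ∀ x ∈ p.support, x ∉ C (i + 1) ∩ C i) →
      ∃ i, w (i + 1) ∈ C (i + 1)}

-- Auxiliary material

/-- First vertex of a walk lying in `T`, with the prefix walk avoiding `T`. -/
lemma firstHit {G : SimpleGraph V} {a b : V} (p : G.Walk a b) (T : Set V)
    (hx : ∃ x ∈ p.support, x ∈ T) :
    ∃ x, x ∈ T ∧ x ∈ p.support ∧ ∃ q : G.Walk a x, q.length ≤ p.length ∧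
      ∀ y ∈ q.support, y ≠ x → y ∉ T := by
  induction p with
  | nil =>
    obtain ⟨x, hxs, hxT⟩ := hx
    simp only [SimpleGraph.Walk.support_nil, List.mem_singleton] at hxs
    subst hxs
    refine ⟨x, hxT, by simp, SimpleGraph.Walk.nil, by simp, ?_⟩
    intro y hy hne
    simp only [SimpleGraph.Walk.support_nil, List.mem_singleton] at hy
    exact absurd hy hne
  | @cons u c d hadj p ih =>
    by_cases hu : u ∈ T
    · refine ⟨u, hu, SimpleGraph.Walk.start_mem_support _, SimpleGraph.Walk.nil, by simp, ?_⟩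
      intro y hy hne
      simp only [SimpleGraph.Walk.support_nil, List.mem_singleton] at hy
      exact absurd hy hne
    · obtain ⟨x, hxs, hxT⟩ := hx
      have hxs' : x ∈ p.support := by
        rcases (by simpa [SimpleGraph.Walk.support_cons] using hxs : x = u ∨ x ∈ p.support) with h | h
        · exact absurd (h ▸ hxT) hu
        · exact h
      obtain ⟨y, hyT, hys, q, hql, hqy⟩ := ih ⟨x, hxs', hxT⟩
      refine ⟨y, hyT, by simp [SimpleGraph.Walk.support_cons, hys],
        SimpleGraph.Walk.cons hadj q, by simpa using Nat.succ_le_succ hql, ?_⟩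
      intro z hz hne
      rcases (by simpa [SimpleGraph.Walk.support_cons] using hz : z = u ∨ z ∈ q.support) with h | h
      · exact h ▸ hu
      · exact hqy z h hne

/-- The downward-closed set of the first `i` vertices. -/
def Sset (ord : V → ℕ) (i : ℕ) : Set V := {u | ord u < i}

open Classical in
/-- The cops' strategy. -/
noncomputable def strat [Fintype V] [DecidableEq V] (G : SimpleGraph V) (r : ℕ) (ord : V → ℕ)
    (h : List V) : Finset V :=
  (match h.getLast? with
    | none => (∅ : Finset V)
    | some v => if v ∈ Sset ord (h.length - 1) then ∅
        else Finset.univ.filter (· ∈ sepSet G r v (Sset ord (h.length - 1))))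
  ∪ Finset.univ.filter (fun u => ord u = h.length - 1)

open Classical in
lemma strat_eval [Fintype V] [DecidableEq V] (G : SimpleGraph V) (r : ℕ) (ord : V → ℕ)
    (w : ℕ → V) (i : ℕ) (hw : w i ∉ Sset ord i) :
    strat G r ord ((List.range (i + 1)).map w) =
      Finset.univ.filter (· ∈ sepSet G r (w i) (Sset ord i))
        ∪ Finset.univ.filter (fun u => ord u = i) := by
  have hlast : ((List.range (i + 1)).map w).getLast? = some (w i) := by
    rw [List.range_succ, List.map_append]
    simp
  have hlen : ((List.range (i + 1)).map w).length - 1 = i := by simp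
  unfold strat
  rw [hlast, hlen]
  simp only [hw, if_false]

open Classical in
lemma strat_card [Fintype V] [DecidableEq V] (G : SimpleGraph V) (r : ℕ) (ord : V → ℕ)
    (hinj : Function.Injective ord) (k : ℕ) (hsw : SWOrd G r ord k) (h : List V) :
    (strat G r ord h).card ≤ k + 1 := by
  refine le_trans (Finset.card_union_le _ _) (Nat.add_le_add ?_ ?_)
  · set m := h.length - 1 with hm
    rcases hl : h.getLast? with _ | v
    · show (∅ : Finset V).card ≤ k
      simp
    · show (if v ∈ Sset ord m then (∅ : Finset V)
        else Finset.univ.filter (· ∈ sepSet G r v (Sset ord m))).card ≤ k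
      by_cases hv : v ∈ Sset ord m
      · simp [hv]
      · rw [if_neg hv]
        have h1 : ((Finset.univ.filter (· ∈ sepSet G r v (Sset ord m))) : Set V)
            = sepSet G r v (Sset ord m) := by
          ext x; simp
        calc (Finset.univ.filter (· ∈ sepSet G r v (Sset ord m))).card
            = ((Finset.univ.filter (· ∈ sepSet G r v (Sset ord m))) : Set V).ncard := by
              rw [Set.ncard_coe_finset]
          _ = (sepSet G r v (Sset ord m)).ncard := by rw [h1]
          _ ≤ k := hsw _ (fun a b hab hb => lt_of_le_of_lt hab hb) v hv
  · refine Finset.card_le_one.mpr (fun a ha b hb => hinj ?_)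
    simp only [Finset.mem_filter] at ha hb
    rw [ha.2, hb.2]

/-- `copwidth_r(G) ≤ sw_{2r}(G) + 1`. -/
theorem stmt15 [Fintype V] [DecidableEq V] (G : SimpleGraph V) (r : ℕ) (hr : 1 ≤ r) :
    copwidth G r ≤ sepWidth G (2 * r) + 1 := by
  classical
  have hne : {k | ∃ ord : V → ℕ, Function.Injective ord ∧ SWOrd G (2 * r) ord k}.Nonempty := by
    refine ⟨Fintype.card V, fun v => ((Fintype.equivFin V) v : ℕ),
      fun a b hab => (Fintype.equivFin V).injective (Fin.val_injective hab), ?_⟩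
    intro S _ v _
    calc (sepSet G (2 * r) v S).ncard ≤ (Set.univ : Set V).ncard :=
          Set.ncard_le_ncard (Set.subset_univ _) Set.finite_univ
      _ = Fintype.card V := by rw [Set.ncard_univ, Nat.card_eq_fintype_card]
  obtain ⟨ord, hinj, hsw⟩ := Nat.sInf_mem hne
  refine Nat.sInf_le ⟨strat G (2 * r) ord,
    fun h => strat_card G (2 * r) ord hinj _ hsw h, ?_⟩
  intro w C hC0 hCdef hmove
  by_contra hno
  push_neg at hno
  have hCeq : ∀ i, w i ∉ Sset ord i → C (i + 1) =
      Finset.univ.filter (· ∈ sepSet G (2 * r) (w i) (Sset ord i))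
        ∪ Finset.univ.filter (fun u => ord u = i) := by
    intro i hwi
    rw [hCdef i, strat_eval G (2 * r) ord w i hwi]
  have key : ∀ i, (w i ∉ Sset ord i) ∧
      ∀ x ∈ (hmove i).choose.support, x ∉ Sset ord i := by
    intro i
    induction i with
    | zero =>
      constructor
      · simp [Sset]
      · intro x _ hx
        simp [Sset] at hx
    | succ i ih =>
      obtain ⟨hwi, hA⟩ := ih
      obtain ⟨hpl, hpav⟩ := (hmove i).choose_spec
      have hw1 : w (i + 1) ∉ Sset ord (i + 1) := by
        intro hmem
        have h1 : w (i + 1) ∉ Sset ord i := hA _ ((hmove i).choose.end_mem_support)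
        have h2 : ord (w (i + 1)) = i := by
          simp only [Sset, Set.mem_setOf_eq] at hmem h1
          omega
        have hc : w (i + 1) ∈ C (i + 1) := by
          rw [hCeq i hwi]
          simp [h2]
        exact hno i hc
      refine ⟨hw1, ?_⟩
      by_contra hbad
      push_neg at hbad
      obtain ⟨x0, hx0s, hx0⟩ := hbad
      obtain ⟨hp1l, hp1av⟩ := (hmove (i + 1)).choose_spec
      obtain ⟨x, hxT, hxs, q, hql, hqav⟩ :=
        firstHit (hmove (i + 1)).choose (Sset ord (i + 1)) ⟨x0, hx0s, hx0⟩
      have hxsep : x ∈ sepSet G (2 * r) (w (i + 1)) (Sset ord (i + 1)) := by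
        refine ⟨hxT, q, by omega, fun y hy _ hy2 => hqav y hy hy2⟩
      have hx2 : x ∈ C (i + 2) := by
        rw [hCeq (i + 1) hw1]
        simp only [Finset.mem_union, Finset.mem_filter, Finset.mem_univ, true_and]
        exact Or.inl hxsep
      have hx1 : x ∈ C (i + 1) := by
        rw [hCeq i hwi]
        simp only [Finset.mem_union, Finset.mem_filter, Finset.mem_univ, true_and]
        by_cases hcase : ord x = i
        · exact Or.inr hcase
        · left
          have hxSi : x ∈ Sset ord i := by
            simp only [Sset, Set.mem_setOf_eq] at hxT ⊢
            omega
          refine ⟨hxSi, (hmove i).choose.append q, ?_, ?_⟩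
          · rw [SimpleGraph.Walk.length_append]
            omega
          · intro y hy _ hy2
            rw [SimpleGraph.Walk.support_append] at hy
            rcases List.mem_append.mp hy with h | h
            · exact hA y h
            · intro hyS
              exact hqav y (List.mem_of_mem_tail h) hy2 (Nat.lt_succ_of_lt hyS)
      exact hp1av x hxs (Finset.mem_inter.mpr ⟨hx2, hx1⟩)
  exact (key (Finset.univ.sup ord + 1)).1
    (Nat.lt_succ_of_le (Finset.le_sup (Finset.mem_univ _)))
end
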